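/- Assume A uses only read/write registers and n ≥ 3. If a finite execution α of A is closed, then the competitors-valency W(α) contains exactly one element. -/

import Mathlib

set_option autoImplicit false

/-! ## Base objects and primitives -/

/-- A base object: a shared-memory object accessed via atomic primitives.
Responses of primitives are encoded as lists of naturals. -/
structure BaseObject : Type 1 where
  State : Type
  init : State
  Prim : Type
  apply : Prim → State → State × List ℕ

/-- A base object has *interfering* primitives if at any state, the application of
any pair of primitives either commutes or one overwrites the other. -/
def Interfering (B : BaseObject) : Prop :=
  ∀ (f g : B.Prim) (s : B.State),
    (B.apply g (B.apply f s).1).1 = (B.apply f (B.apply g s).1).1 ∨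
    (B.apply f (B.apply g s).1).1 = (B.apply f s).1 ∨
    (B.apply g (B.apply f s).1).1 = (B.apply g s).1

/-- A read/write register: primitive `some v` writes `v`, primitive `none` reads. -/
def RWRegister : BaseObject where
  State := ℕ
  init := 0
  Prim := Option ℕ
  apply := fun p s =>
    match p with
    | some v => (v, [])
    | none => (s, [s])

/-- A `w`-window register stores the sequence of the last `w` values written to it;
`some v` appends `v` (dropping the oldest value if the length exceeds `w`),
`none` reads the stored sequence. -/
def WindowRegister (w : ℕ) : BaseObject where
  State := List ℕ
  init := []
  Prim := Option ℕ
  apply := fun p s =>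
    match p with
    | some v => ((s ++ [v]).drop (s.length + 1 - w), [])
    | none => (s, s)

/-- A test&set object: `T&S()` atomically sets the bit and returns the previous value. -/
def TestAndSet : BaseObject where
  State := Bool
  init := false
  Prim := Unit
  apply := fun _ s => (true, [if s then 1 else 0])

/-! ## Sequential specifications -/

/-- A (possibly nondeterministic) sequential specification for `n` processes.
`δ s i op s' r` holds if process `i` invoking `op` in state `s` may move the object
to state `s'` returning `r`.  `allowed i hist op` says whether process `i`, having
already invoked the operations `hist`, may invoke `op` (used to express one-shot
objects and the referee/competitor roles). -/
structure Spec (n : ℕ) : Type 1 where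
  Op : Type
  Res : Type
  State : Type
  init : State
  δ : State → Fin n → Op → State → Res → Prop
  allowed : Fin n → List Op → Op → Bool

/-- Valid sequential executions of a specification, starting at a given state. -/
inductive SeqRun {n : ℕ} (S : Spec n) : S.State → List (Fin n × S.Op × S.Res) → Prop
  | nil (s : S.State) : SeqRun S s []
  | cons {s : S.State} {i : Fin n} {op : S.Op} {s' : S.State} {r : S.Res}
      {l : List (Fin n × S.Op × S.Res)} :
      S.δ s i op s' r → SeqRun S s' l → SeqRun S s ((i, op, r) :: l)

/-! ## Implementations, configurations and executions -/

/-- Events of an execution: high-level invocations/responses and primitive steps. -/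
inductive Event (n : ℕ) (S : Spec n) : Type
  | inv (i : Fin n) (op : S.Op)
  | res (i : Fin n) (r : S.Res)
  | step (i : Fin n)

/-- The process performing an event. -/
def Event.proc {n : ℕ} {S : Spec n} : Event n S → Fin n
  | .inv i _ => i
  | .res i _ => i
  | .step i => i

/-- An implementation of the high-level object `S` for `n` processes from base objects
`M o`, `o : ι`: a deterministic state machine per process.  In local state `ℓ`,
process `i`'s next primitive step applies `prim i ℓ` to base object `obj i ℓ` and
updates the local state with the response via `updL`; `ret i ℓ` is the response of the
current high-level operation once it is ready. -/
structure Impl (n : ℕ) (S : Spec n) (ι : Type) (M : ι → BaseObject) : Type 1 where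
  Local : Fin n → Type
  initL : ∀ i, Local i
  invokeL : ∀ i, S.Op → Local i → Local i
  obj : ∀ i, Local i → ι
  prim : ∀ i (ℓ : Local i), (M (obj i ℓ)).Prim
  updL : ∀ i, Local i → List ℕ → Local i
  ret : ∀ i, Local i → Option S.Res

/-- A configuration: states of all base objects and all processes
(local state, pending operation, history of invoked operations). -/
structure Config {n : ℕ} {S : Spec n} {ι : Type} {M : ι → BaseObject}
    (A : Impl n S ι M) : Type where
  mem : ∀ o, (M o).State
  loc : ∀ i, A.Local i
  pend : Fin n → Option S.Op
  hist : Fin n → List S.Op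

open Classical in
/-- Update the state of one base object in the memory. -/
noncomputable def updMem {ι : Type} {M : ι → BaseObject}
    (mem : ∀ o, (M o).State) (o : ι) (s : (M o).State) : ∀ o', (M o').State :=
  fun o' =>
    if h : o' = o then cast (congrArg (fun x => (M x).State) h).symm s else mem o'

open Classical in
/-- The (deterministic) transition of a configuration by an event; `none` if the event
is not enabled.  An invocation requires the process to be idle and the operation to be
allowed by the specification; a primitive step requires a pending operation whose
response is not yet ready; a response requires the response to be ready. -/
noncomputable def nextConfig {n : ℕ} {S : Spec n} {ι : Type} {M : ι → BaseObject}
    (A : Impl n S ι M) (C : Config A) : Event n S → Option (Config A)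
  | .inv i op =>
    match C.pend i with
    | some _ => none
    | none =>
      if S.allowed i (C.hist i) op then
        some { C with
          pend := Function.update C.pend i (some op)
          hist := Function.update C.hist i (C.hist i ++ [op])
          loc := Function.update C.loc i (A.invokeL i op (C.loc i)) }
      else none
  | .step i =>
    match C.pend i with
    | none => none
    | some _ =>
      if A.ret i (C.loc i) = none then
        some { C with
          mem := updMem C.mem (A.obj i (C.loc i))
            ((M (A.obj i (C.loc i))).apply (A.prim i (C.loc i))
              (C.mem (A.obj i (C.loc i)))).1
          loc := Function.update C.loc i
            (A.updL i (C.loc i)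
              ((M (A.obj i (C.loc i))).apply (A.prim i (C.loc i))
                (C.mem (A.obj i (C.loc i)))).2) }
      else none
  | .res i r =>
    match C.pend i with
    | none => none
    | some _ =>
      if A.ret i (C.loc i) = some r then
        some { C with pend := Function.update C.pend i none }
      else none

/-- The initial configuration. -/
def initConfig {n : ℕ} {S : Spec n} {ι : Type} {M : ι → BaseObject}
    (A : Impl n S ι M) : Config A :=
  { mem := fun o => (M o).init
    loc := fun i => A.initL i
    pend := fun _ => none
    hist := fun _ => [] }

/-- The configuration reached by a finite sequence of events from the initial
configuration (`none` if the sequence is not a valid execution). -/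
noncomputable def execConfig {n : ℕ} {S : Spec n} {ι : Type} {M : ι → BaseObject}
    (A : Impl n S ι M) (α : List (Event n S)) : Option (Config A) :=
  α.foldlM (fun C e => nextConfig A C e) (initConfig A)

/-- `α` is a (finite) execution of the implementation `A`. -/
def IsExec {n : ℕ} {S : Spec n} {ι : Type} {M : ι → BaseObject}
    (A : Impl n S ι M) (α : List (Event n S)) : Prop :=
  (execConfig A α).isSome = true

/-- The length-`m` prefix of an infinite sequence of events. -/
def prefE {n : ℕ} {S : Spec n} (E : ℕ → Event n S) (m : ℕ) : List (Event n S) :=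
  (List.range m).map E

/-! ## Linearizability -/

/-- In execution `α`, the invocation at position `j` is matched by the response at
position `k` with output `r` (no earlier response of the same process intervening). -/
def Matches {n : ℕ} {S : Spec n} (α : List (Event n S)) (j k : ℕ) (r : S.Res) : Prop :=
  ∃ i op, α[j]? = some (Event.inv i op) ∧ α[k]? = some (Event.res i r) ∧ j < k ∧
    ∀ m, j < m → m < k → ∀ r', α[m]? ≠ some (Event.res i r')

/-- The operation invoked at position `j` precedes (returns before the invocation of)
the operation invoked at position `j'`. -/
def Precedes {n : ℕ} {S : Spec n} (α : List (Event n S)) (j j' : ℕ) : Prop :=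
  ∃ k r, Matches α j k r ∧ k < j'

/-- `σ` is a linearization of the execution `α`: a sequence of operation instances of
`α` (identified by the position of their invocation, paired with a response) that
contains every complete operation of `α` with its actual output and possibly some
pending ones, respects the real-time order of `α`, and is a valid sequential
execution of the specification. -/
structure IsLinearization {n : ℕ} (S : Spec n) (α : List (Event n S))
    (σ : List (ℕ × S.Res)) : Prop where
  inv_mem : ∀ p ∈ σ, ∃ i op, α[p.1]? = some (Event.inv i op)
  nodup : (σ.map Prod.fst).Nodup
  complete_mem : ∀ j k r, Matches α j k r → (j, r) ∈ σ
  complete_out : ∀ j k r r', Matches α j k r → (j, r') ∈ σ → r' = r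
  realtime : σ.Pairwise (fun a b => ¬ Precedes α b.1 a.1)
  valid : ∃ l : List (Fin n × S.Op × S.Res),
    List.Forall₂ (fun (p : ℕ × S.Res) (e : Fin n × S.Op × S.Res) =>
      α[p.1]? = some (Event.inv e.1 e.2.1) ∧ p.2 = e.2.2) σ l ∧
    SeqRun S S.init l

/-- `L` is a linearization function for `A`: it maps every execution to a
linearization of it. -/
def IsLinFun {n : ℕ} {S : Spec n} {ι : Type} {M : ι → BaseObject}
    (A : Impl n S ι M) (L : List (Event n S) → List (ℕ × S.Res)) : Prop :=
  ∀ α, IsExec A α → IsLinearization S α (L α)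

/-- `L` is prefix-closed: the linearization of a prefix is a prefix of the
linearization of an extension. -/
def PrefixClosedLin {n : ℕ} {S : Spec n} {ι : Type} {M : ι → BaseObject}
    (A : Impl n S ι M) (L : List (Event n S) → List (ℕ × S.Res)) : Prop :=
  ∀ α β, IsExec A (α ++ β) → L α <+: L (α ++ β)

/-- `L` is subsequence-closed: the linearization of a prefix is a subsequence of the
linearization of an extension. -/
def SubseqClosedLin {n : ℕ} {S : Spec n} {ι : Type} {M : ι → BaseObject}
    (A : Impl n S ι M) (L : List (Event n S) → List (ℕ × S.Res)) : Prop :=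
  ∀ α β, IsExec A (α ++ β) → List.Sublist (L α) (L (α ++ β))

/-- Strong linearizability: there is a prefix-closed linearization function. -/
def StronglyLinearizable {n : ℕ} {S : Spec n} {ι : Type} {M : ι → BaseObject}
    (A : Impl n S ι M) : Prop :=
  ∃ L, IsLinFun A L ∧ PrefixClosedLin A L

/-- Decisive linearizability: there is a subsequence-closed linearization function. -/
def DecisivelyLinearizable {n : ℕ} {S : Spec n} {ι : Type} {M : ι → BaseObject}
    (A : Impl n S ι M) : Prop :=
  ∃ L, IsLinFun A L ∧ SubseqClosedLin A L

/-! ## Progress conditions -/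

/-- Wait-freedom: in every infinite execution, a process that takes infinitely many
primitive steps completes infinitely many operations. -/
def WaitFree {n : ℕ} {S : Spec n} {ι : Type} {M : ι → BaseObject}
    (A : Impl n S ι M) : Prop :=
  ∀ E : ℕ → Event n S, (∀ m, IsExec A (prefE E m)) →
    ∀ i : Fin n, (∀ m, ∃ m', m ≤ m' ∧ E m' = Event.step i) →
      ∀ m, ∃ m', m ≤ m' ∧ ∃ r, E m' = Event.res i r

/-- Lock-freedom: in every infinite execution, infinitely many operations complete. -/
def LockFree {n : ℕ} {S : Spec n} {ι : Type} {M : ι → BaseObject}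
    (A : Impl n S ι M) : Prop :=
  ∀ E : ℕ → Event n S, (∀ m, IsExec A (prefE E m)) →
    ∀ m, ∃ m', m ≤ m' ∧ ∃ i r, E m' = Event.res i r

/-! ## High-level object specifications -/

/-- Queue: operation `some v` is `enqueue(v)` (returning `none`), operation `none` is
`dequeue()`, returning the oldest enqueued value not yet dequeued (`some v`) or
`none` (empty). -/
def QueueSpec (n : ℕ) : Spec n where
  Op := Option ℕ
  Res := Option ℕ
  State := List ℕ
  init := []
  δ := fun s _ op s' r =>
    (∃ v, op = some v ∧ s' = s ++ [v] ∧ r = none) ∨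
    (op = none ∧ ((s = [] ∧ s' = [] ∧ r = none) ∨ ∃ v t, s = v :: t ∧ s' = t ∧ r = some v))
  allowed := fun _ _ _ => true

/-- Stack: operation `some v` is `push(v)` (returning `none`), operation `none` is
`pop()`, returning the most recently pushed value not yet popped (`some v`) or
`none` (empty). -/
def StackSpec (n : ℕ) : Spec n where
  Op := Option ℕ
  Res := Option ℕ
  State := List ℕ
  init := []
  δ := fun s _ op s' r =>
    (∃ v, op = some v ∧ s' = v :: s ∧ r = none) ∨
    (op = none ∧ ((s = [] ∧ s' = [] ∧ r = none) ∨ ∃ v t, s = v :: t ∧ s' = t ∧ r = some v))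
  allowed := fun _ _ _ => true

/-- Operations of the (one-shot or long-lived) contest objects. -/
inductive ContestOp : Type
  | compete
  | decide

/-- The one-shot contest object for `n` processes: each competitor `p_1, …, p_{n-1}`
may invoke `compete()` once, which always returns `true`; the referee `p_0` may invoke
`decide()` once, which returns the index of the first process that executed
`compete()` (`Sum.inr i`) or `false` (`Sum.inl false`) if there is no such operation. -/
def ContestSpec (n : ℕ) : Spec n where
  Op := ContestOp
  Res := Bool ⊕ ℕ
  State := Option (Fin n) × Bool
  init := (none, false)
  δ := fun s i op s' r =>
    (op = ContestOp.compete ∧ i.val ≠ 0 ∧ r = Sum.inl true ∧ s'.2 = s.2 ∧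
      s'.1 = (match s.1 with | some j => some j | none => some i)) ∨
    (op = ContestOp.decide ∧ i.val = 0 ∧ s.2 = false ∧ s' = (s.1, true) ∧
      r = (match s.1 with | some j => Sum.inr j.val | none => Sum.inl false))
  allowed := fun i hist op =>
    hist.isEmpty &&
      (match op with
       | ContestOp.compete => i.val != 0
       | ContestOp.decide => i.val == 0)

/-- The long-lived contest object for `n` processes: each competitor `p_1, …, p_{n-1}`
may invoke `compete()` any number of times (returning nothing, i.e. `none`); the
referee `p_0` may invoke `decide()` at most once, which returns `some x` for some
integer `x` such that every competitor has executed at most `x` operations so far. -/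
def LLContestSpec (n : ℕ) : Spec n where
  Op := ContestOp
  Res := Option ℕ
  State := (Fin n → ℕ) × Bool
  init := (fun _ => 0, false)
  δ := fun s i op s' r =>
    (op = ContestOp.compete ∧ i.val ≠ 0 ∧
      s' = (Function.update s.1 i (s.1 i + 1), s.2) ∧ r = none) ∨
    (op = ContestOp.decide ∧ i.val = 0 ∧ s.2 = false ∧ s'.2 = true ∧ s'.1 = s.1 ∧
      ∃ x : ℕ, r = some x ∧ ∀ j : Fin n, j.val ≠ 0 → s.1 j ≤ x)
  allowed := fun i hist op =>
    match op with
    | ContestOp.compete => i.val != 0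
    | ContestOp.decide => (i.val == 0) && hist.isEmpty

/-- Counter: operation `true` is `increment()` (returning `none`), operation `false`
is `read()`, returning the number of increments so far. -/
def CounterSpec (n : ℕ) : Spec n where
  Op := Bool
  Res := Option ℕ
  State := ℕ
  init := 0
  δ := fun s _ op s' r =>
    (op = true ∧ s' = s + 1 ∧ r = none) ∨ (op = false ∧ s' = s ∧ r = some s)
  allowed := fun _ _ _ => true

/-- Max register: operation `some v` is `maxWrite(v)` (returning `none`), operation
`none` is `maxRead()`, returning the largest value written so far. -/
def MaxRegSpec (n : ℕ) : Spec n where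
  Op := Option ℕ
  Res := Option ℕ
  State := ℕ
  init := 0
  δ := fun s _ op s' r =>
    (∃ v, op = some v ∧ s' = max s v ∧ r = none) ∨ (op = none ∧ s' = s ∧ r = some s)
  allowed := fun _ _ _ => true

/-- Snapshot with `n` components: operation `Sum.inl (j, v)` atomically updates
component `j` to `v` (returning `none`); operation `Sum.inr ()` is `scan()`,
atomically returning all components. -/
def SnapshotSpec (n : ℕ) : Spec n where
  Op := (Fin n × ℕ) ⊕ Unit
  Res := Option (Fin n → ℕ)
  State := Fin n → ℕ
  init := fun _ => 0
  δ := fun s _ op s' r =>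
    (∃ j v, op = Sum.inl (j, v) ∧ s' = Function.update s j v ∧ r = none) ∨
    (op = Sum.inr () ∧ s' = s ∧ r = some s)
  allowed := fun _ _ _ => true

/-- Fetch&increment: atomically returns the current value and increments it. -/
def FetchIncSpec (n : ℕ) : Spec n where
  Op := Unit
  Res := ℕ
  State := ℕ
  init := 0
  δ := fun s _ _ s' r => s' = s + 1 ∧ r = s
  allowed := fun _ _ _ => true

/-- Fetch&add: `fetch&add(v)` atomically returns the current value and adds `v`. -/
def FetchAddSpec (n : ℕ) : Spec n where
  Op := ℕ
  Res := ℕ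
  State := ℕ
  init := 0
  δ := fun s _ op s' r => s' = s + op ∧ r = s
  allowed := fun _ _ _ => true

/-! ## Valency machinery for the long-lived contest object -/

/-- A sequence of events involves only the competitors `p_1, …, p_{n-1}`. -/
def CompetitorsOnly {n : ℕ} {S : Spec n} (β : List (Event n S)) : Prop :=
  ∀ e ∈ β, (Event.proc e).val ≠ 0

/-- `decide()` appears in the linearization `L α` with output `x`. -/
def DecidesVal {n : ℕ}
    (L : List (Event n (LLContestSpec n)) → List (ℕ × (LLContestSpec n).Res))
    (α : List (Event n (LLContestSpec n))) (x : ℕ) : Prop :=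
  ∃ j : ℕ, ∃ i : Fin n, i.val = 0 ∧
    α[j]? = some (Event.inv i ContestOp.decide) ∧ (j, (some x : Option ℕ)) ∈ L α

/-- The competitors-valency `W(α)`: all `x` such that some finite competitors-only
extension `β` of `α` has `decide()` appearing in `L(αβ)` with output `x`. -/
def Wset {n : ℕ} {ι : Type} {M : ι → BaseObject} (A : Impl n (LLContestSpec n) ι M)
    (L : List (Event n (LLContestSpec n)) → List (ℕ × (LLContestSpec n).Res))
    (α : List (Event n (LLContestSpec n))) : Set ℕ :=
  { x | ∃ β, CompetitorsOnly β ∧ IsExec A (α ++ β) ∧ DecidesVal L (α ++ β) x }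

/-- `α` is competitors-closed: every infinite competitors-only extension of `α` has a
finite prefix `β` such that `decide()` appears in `L(αβ)`. -/
def ClosedExec {n : ℕ} {ι : Type} {M : ι → BaseObject} (A : Impl n (LLContestSpec n) ι M)
    (L : List (Event n (LLContestSpec n)) → List (ℕ × (LLContestSpec n).Res))
    (α : List (Event n (LLContestSpec n))) : Prop :=
  ∀ E : ℕ → Event n (LLContestSpec n),
    (∀ m, (Event.proc (E m)).val ≠ 0) →
    (∀ m, IsExec A (α ++ prefE E m)) →
    ∃ m x, DecidesVal L (α ++ prefE E m) x

/-- `α` is competitors-supervalent: not competitors-closed. -/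
def SupervalentExec {n : ℕ} {ι : Type} {M : ι → BaseObject}
    (A : Impl n (LLContestSpec n) ι M)
    (L : List (Event n (LLContestSpec n)) → List (ℕ × (LLContestSpec n).Res))
    (α : List (Event n (LLContestSpec n))) : Prop :=
  ¬ ClosedExec A L α

/-- The next event of process `r` in configuration `C` of an implementation of the
long-lived contest object: invoke its (unique) operation if idle, respond if the
response is ready, and otherwise take its next primitive step. -/
noncomputable def llNextEvent {n : ℕ} {ι : Type} {M : ι → BaseObject}
    (A : Impl n (LLContestSpec n) ι M) (C : Config A) (r : Fin n) :
    Event n (LLContestSpec n) :=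
  match C.pend r with
  | none => Event.inv r (if r.val = 0 then ContestOp.decide else ContestOp.compete)
  | some _ =>
    match A.ret r (C.loc r) with
    | some v => Event.res r v
    | none => Event.step r

/-- `α` extended by the next step of process `r` (written `αr` in the paper);
`α` is left unchanged if `r` has no enabled next step. -/
noncomputable def sched1 {n : ℕ} {ι : Type} {M : ι → BaseObject}
    (A : Impl n (LLContestSpec n) ι M) (α : List (Event n (LLContestSpec n)))
    (r : Fin n) : List (Event n (LLContestSpec n)) :=
  match execConfig A α with
  | none => α
  | some C =>
    match nextConfig A C (llNextEvent A C r) with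
    | none => α
    | some _ => α ++ [llNextEvent A C r]

/-- `α` extended by scheduling the listed processes, each taking its next step in
order; e.g. `sched A α [q, p]` is the execution `αqp` of the paper. -/
noncomputable def sched {n : ℕ} {ι : Type} {M : ι → BaseObject}
    (A : Impl n (LLContestSpec n) ι M) :
    List (Event n (LLContestSpec n)) → List (Fin n) → List (Event n (LLContestSpec n))
  | α, [] => α
  | α, r :: rs => sched A (sched1 A α r) rs

/-- The final configurations of executions `α` and `α'` are indistinguishable to
process `r`: all base objects have the same states, and `r` is in the same state. -/
def ExecIndistTo {n : ℕ} {S : Spec n} {ι : Type} {M : ι → BaseObject}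
    (A : Impl n S ι M) (α α' : List (Event n S)) (r : Fin n) : Prop :=
  ∃ C C', execConfig A α = some C ∧ execConfig A α' = some C' ∧
    C.mem = C'.mem ∧ C.loc r = C'.loc r ∧ C.pend r = C'.pend r ∧ C.hist r = C'.hist r


/-! ### Auxiliary development for the proof -/

section AuxClosed

theorem prefE_succ {n : ℕ} {S : Spec n} (E : ℕ → Event n S) (m : ℕ) :
    prefE E (m + 1) = prefE E m ++ [E m] := by
  simp [prefE, List.range_succ]

theorem prefE_zero {n : ℕ} {S : Spec n} (E : ℕ → Event n S) : prefE E 0 = [] := rfl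

variable {n : ℕ} {ι : Type}

theorem execConfig_append {S : Spec n} {M : ι → BaseObject} (A : Impl n S ι M)
    (α β : List (Event n S)) :
    execConfig A (α ++ β) =
      (execConfig A α).bind (fun C => β.foldlM (fun C e => nextConfig A C e) C) := by
  simp only [execConfig, List.foldlM_append]
  rfl

theorem execConfig_snoc {S : Spec n} {M : ι → BaseObject} (A : Impl n S ι M)
    (α : List (Event n S)) (e : Event n S) :
    execConfig A (α ++ [e]) = (execConfig A α).bind (fun C => nextConfig A C e) := by
  rw [execConfig_append]
  cases execConfig A α with
  | none => rfl
  | some C =>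
    simp only [Option.bind_some, List.foldlM_cons, List.foldlM_nil]
    cases nextConfig A C e <;> simp

theorem isExec_append_left {S : Spec n} {M : ι → BaseObject} {A : Impl n S ι M}
    {α β : List (Event n S)} (h : IsExec A (α ++ β)) : IsExec A α := by
  unfold IsExec at *
  rw [execConfig_append] at h
  cases hx : execConfig A α with
  | none => rw [hx] at h; simp at h
  | some C => simp

theorem isExec_of_prefix {S : Spec n} {M : ι → BaseObject} {A : Impl n S ι M}
    {α γ : List (Event n S)} (h : α <+: γ) (hγ : IsExec A γ) : IsExec A α := by
  obtain ⟨t, rfl⟩ := h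
  exact isExec_append_left hγ


/-! #### Inversion and construction lemmas for `nextConfig` -/

section NextConfig

variable {S : Spec n} {M : ι → BaseObject} {A : Impl n S ι M}

theorem nextConfig_inv_inversion {C D : Config A} {i : Fin n} {op : S.Op}
    (h : nextConfig A C (Event.inv i op) = some D) :
    C.pend i = none ∧ S.allowed i (C.hist i) op = true ∧
    D.mem = C.mem ∧
    D.loc = Function.update C.loc i (A.invokeL i op (C.loc i)) ∧
    D.pend = Function.update C.pend i (some op) ∧
    D.hist = Function.update C.hist i (C.hist i ++ [op]) := by
  cases hp : C.pend i with
  | some o => simp [nextConfig, hp] at h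
  | none =>
    simp only [nextConfig, hp] at h
    split at h
    · rename_i hall
      obtain rfl := Option.some.inj h
      exact ⟨rfl, hall, rfl, rfl, rfl, rfl⟩
    · simp at h

theorem nextConfig_res_inversion {C D : Config A} {i : Fin n} {r : S.Res}
    (h : nextConfig A C (Event.res i r) = some D) :
    (∃ op, C.pend i = some op) ∧ A.ret i (C.loc i) = some r ∧
    D.mem = C.mem ∧ D.loc = C.loc ∧
    D.pend = Function.update C.pend i none ∧ D.hist = C.hist := by
  cases hp : C.pend i with
  | none => simp [nextConfig, hp] at h
  | some o =>
    simp only [nextConfig, hp] at h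
    split at h
    · rename_i hret
      obtain rfl := Option.some.inj h
      exact ⟨⟨o, rfl⟩, hret, rfl, rfl, rfl, rfl⟩
    · simp at h

theorem nextConfig_step_inversion {C D : Config A} {i : Fin n}
    (h : nextConfig A C (Event.step i) = some D) :
    (∃ op, C.pend i = some op) ∧ A.ret i (C.loc i) = none ∧
    D.mem = updMem C.mem (A.obj i (C.loc i))
      ((M (A.obj i (C.loc i))).apply (A.prim i (C.loc i)) (C.mem (A.obj i (C.loc i)))).1 ∧
    D.loc = Function.update C.loc i
      (A.updL i (C.loc i)
        ((M (A.obj i (C.loc i))).apply (A.prim i (C.loc i)) (C.mem (A.obj i (C.loc i)))).2) ∧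
    D.pend = C.pend ∧ D.hist = C.hist := by
  cases hp : C.pend i with
  | none => simp [nextConfig, hp] at h
  | some o =>
    simp only [nextConfig, hp] at h
    split at h
    · rename_i hret
      obtain rfl := Option.some.inj h
      exact ⟨⟨o, rfl⟩, hret, rfl, rfl, rfl, rfl⟩
    · simp at h

theorem nextConfig_inv_some {C : Config A} {i : Fin n} {op : S.Op}
    (hp : C.pend i = none) (hall : S.allowed i (C.hist i) op = true) :
    nextConfig A C (Event.inv i op) = some
      { C with pend := Function.update C.pend i (some op),
               hist := Function.update C.hist i (C.hist i ++ [op]),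
               loc := Function.update C.loc i (A.invokeL i op (C.loc i)) } := by
  simp [nextConfig, hp, hall]

theorem nextConfig_res_some {C : Config A} {i : Fin n} {op : S.Op} {r : S.Res}
    (hp : C.pend i = some op) (hret : A.ret i (C.loc i) = some r) :
    nextConfig A C (Event.res i r) = some { C with pend := Function.update C.pend i none } := by
  simp [nextConfig, hp, hret]

theorem nextConfig_step_some {C : Config A} {i : Fin n} {op : S.Op}
    (hp : C.pend i = some op) (hret : A.ret i (C.loc i) = none) :
    nextConfig A C (Event.step i) = some
      { C with
        mem := updMem C.mem (A.obj i (C.loc i))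
          ((M (A.obj i (C.loc i))).apply (A.prim i (C.loc i)) (C.mem (A.obj i (C.loc i)))).1,
        loc := Function.update C.loc i
          (A.updL i (C.loc i)
            ((M (A.obj i (C.loc i))).apply (A.prim i (C.loc i))
              (C.mem (A.obj i (C.loc i)))).2) } := by
  simp [nextConfig, hp, hret]

/-- Components of processes other than the one taking the event are unchanged. -/
theorem nextConfig_other {C D : Config A} {e : Event n S}
    (h : nextConfig A C e = some D) {j : Fin n} (hj : j ≠ e.proc) :
    D.loc j = C.loc j ∧ D.pend j = C.pend j ∧ D.hist j = C.hist j := by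
  cases e with
  | inv i op =>
    obtain ⟨-, -, -, hl, hp, hh⟩ := nextConfig_inv_inversion h
    simp only [Event.proc] at hj
    rw [hl, hp, hh, Function.update_of_ne hj, Function.update_of_ne hj,
      Function.update_of_ne hj]
    exact ⟨rfl, rfl, rfl⟩
  | res i r =>
    obtain ⟨-, -, -, hl, hp, hh⟩ := nextConfig_res_inversion h
    simp only [Event.proc] at hj
    rw [hl, hp, hh, Function.update_of_ne hj]
    exact ⟨rfl, rfl, rfl⟩
  | step i =>
    obtain ⟨-, -, -, hl, hp, hh⟩ := nextConfig_step_inversion h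
    simp only [Event.proc] at hj
    rw [hl, hp, hh, Function.update_of_ne hj]
    exact ⟨rfl, rfl, rfl⟩

theorem nextConfig_mem_nonstep {C D : Config A} {e : Event n S}
    (h : nextConfig A C e = some D) (he : ∀ i, e ≠ Event.step i) :
    D.mem = C.mem := by
  cases e with
  | inv i op => exact (nextConfig_inv_inversion h).2.2.1
  | res i r => exact (nextConfig_res_inversion h).2.2.1
  | step i => exact absurd rfl (he i)

end NextConfig


/-! #### Indistinguishability up to one process, and bisimulation -/

section Bisim

variable {S : Spec n} {M : ι → BaseObject} {A : Impl n S ι M}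

/-- Two configurations agree on memory and on every process except possibly `p`. -/
def AgreeExc (p : Fin n) (C C' : Config A) : Prop :=
  C.mem = C'.mem ∧ ∀ j, j ≠ p →
    C.loc j = C'.loc j ∧ C.pend j = C'.pend j ∧ C.hist j = C'.hist j

theorem AgreeExc.refl (p : Fin n) (C : Config A) : AgreeExc p C C :=
  ⟨rfl, fun _ _ => ⟨rfl, rfl, rfl⟩⟩

theorem AgreeExc.symm {p : Fin n} {C C' : Config A} (h : AgreeExc p C C') :
    AgreeExc p C' C :=
  ⟨h.1.symm, fun j hj => ⟨(h.2 j hj).1.symm, (h.2 j hj).2.1.symm, (h.2 j hj).2.2.symm⟩⟩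

theorem AgreeExc.trans {p : Fin n} {C C' C'' : Config A}
    (h : AgreeExc p C C') (h' : AgreeExc p C' C'') : AgreeExc p C C'' :=
  ⟨h.1.trans h'.1, fun j hj =>
    ⟨(h.2 j hj).1.trans (h'.2 j hj).1, (h.2 j hj).2.1.trans (h'.2 j hj).2.1,
      (h.2 j hj).2.2.trans (h'.2 j hj).2.2⟩⟩

theorem bisim_next {p : Fin n} {C C' D : Config A} {e : Event n S}
    (h : nextConfig A C e = some D) (hep : e.proc ≠ p) (hag : AgreeExc p C C') :
    ∃ D', nextConfig A C' e = some D' ∧ AgreeExc p D D' := by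
  obtain ⟨hmem, hcomp⟩ := hag
  cases e with
  | inv i op =>
    simp only [Event.proc] at hep
    obtain ⟨hl, hp, hh⟩ := hcomp i hep
    obtain ⟨hpend, hall, hDm, hDl, hDp, hDh⟩ := nextConfig_inv_inversion h
    refine ⟨_, nextConfig_inv_some (hp ▸ hpend) (hh ▸ hall), ?_, fun j hj => ?_⟩
    · rw [hDm]; exact hmem
    · obtain ⟨hl', hp', hh'⟩ := hcomp j hj
      rw [hDl, hDp, hDh]
      by_cases hji : j = i
      · subst hji
        simp [Function.update_self, hl, hh]
      · simp [Function.update_of_ne hji, hl', hp', hh']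
  | res i r =>
    simp only [Event.proc] at hep
    obtain ⟨hl, hp, hh⟩ := hcomp i hep
    obtain ⟨⟨op, hpend⟩, hret, hDm, hDl, hDp, hDh⟩ := nextConfig_res_inversion h
    refine ⟨_, nextConfig_res_some (hp ▸ hpend) (hl ▸ hret), ?_, fun j hj => ?_⟩
    · rw [hDm]; exact hmem
    · obtain ⟨hl', hp', hh'⟩ := hcomp j hj
      rw [hDl, hDp, hDh]
      by_cases hji : j = i
      · subst hji; simp [Function.update_self, hl, hh]
      · simp [Function.update_of_ne hji, hl', hp', hh']
  | step i =>
    simp only [Event.proc] at hep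
    obtain ⟨hl, hp, hh⟩ := hcomp i hep
    obtain ⟨⟨op, hpend⟩, hret, hDm, hDl, hDp, hDh⟩ := nextConfig_step_inversion h
    refine ⟨_, nextConfig_step_some (hp ▸ hpend) (hl ▸ hret), ?_, fun j hj => ?_⟩
    · rw [hDm, hl, hmem]
    · obtain ⟨hl', hp', hh'⟩ := hcomp j hj
      rw [hDl, hDp, hDh]
      by_cases hji : j = i
      · subst hji
        refine ⟨?_, by simp [Function.update_self, hp], by simp [hh]⟩
        simp only [Function.update_self]
        rw [hl, hmem]
      · simp [Function.update_of_ne hji, hl', hp', hh']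

theorem bisim_list {p : Fin n} {C C' D : Config A} {β : List (Event n S)}
    (h : β.foldlM (fun C e => nextConfig A C e) C = some D)
    (hep : ∀ e ∈ β, e.proc ≠ p) (hag : AgreeExc p C C') :
    ∃ D', β.foldlM (fun C e => nextConfig A C e) C' = some D' ∧ AgreeExc p D D' := by
  induction β generalizing C C' with
  | nil =>
    simp only [List.foldlM_nil] at h ⊢
    exact ⟨C', rfl, Option.some.inj h ▸ hag⟩
  | cons e t ih =>
    simp only [List.foldlM_cons] at h ⊢
    cases hne : nextConfig A C e with
    | none => rw [hne] at h; simp at h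
    | some C1 =>
      rw [hne] at h
      rw [show ∀ (g : Config A → Option (Config A)) x, some x >>= g = g x from fun _ _ => rfl] at h
      obtain ⟨C1', hC1', hag1⟩ := bisim_next hne (hep e (by simp)) hag
      obtain ⟨D', hD', hagD⟩ := ih h (fun e' he' => hep e' (by simp [he'])) hag1
      rw [hC1']
      simpa using ⟨D', hD', hagD⟩

/-- Along a list of events avoiding process `j`, the components of `j` are unchanged. -/
theorem foldl_avoid {C D : Config A} {β : List (Event n S)}
    (h : β.foldlM (fun C e => nextConfig A C e) C = some D) {j : Fin n}
    (hep : ∀ e ∈ β, e.proc ≠ j) :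
    D.loc j = C.loc j ∧ D.pend j = C.pend j ∧ D.hist j = C.hist j := by
  induction β generalizing C with
  | nil =>
    simp only [List.foldlM_nil] at h
    obtain rfl := Option.some.inj h
    exact ⟨rfl, rfl, rfl⟩
  | cons e t ih =>
    simp only [List.foldlM_cons] at h
    cases hne : nextConfig A C e with
    | none => rw [hne] at h; simp at h
    | some C1 =>
      rw [hne] at h
      rw [show ∀ (g : Config A → Option (Config A)) x, some x >>= g = g x from fun _ _ => rfl] at h
      obtain ⟨h1, h2, h3⟩ := ih h (fun e' he' => hep e' (by simp [he']))
      obtain ⟨g1, g2, g3⟩ := nextConfig_other hne (Ne.symm (hep e (by simp)))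
      exact ⟨h1.trans g1, h2.trans g2, h3.trans g3⟩

end Bisim


/-! #### The next enabled event of a process -/

section LLNext

variable {M : ι → BaseObject} {A : Impl n (LLContestSpec n) ι M}

theorem llNextEvent_proc (C : Config A) (r : Fin n) :
    (llNextEvent A C r).proc = r := by
  unfold llNextEvent
  cases C.pend r with
  | none => rfl
  | some op => cases A.ret r (C.loc r) <;> rfl

theorem allowed_compete {i : Fin n} (hi : i.val ≠ 0) (h : List ContestOp) :
    (LLContestSpec n).allowed i h ContestOp.compete = true := by
  simp [LLContestSpec, bne_iff_ne, hi]

theorem llNextEvent_enabled {C : Config A} {r : Fin n}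
    (h : r.val ≠ 0 ∨ C.pend r ≠ none) :
    ∃ D, nextConfig A C (llNextEvent A C r) = some D := by
  unfold llNextEvent
  cases hp : C.pend r with
  | none =>
    have hr : r.val ≠ 0 := by
      rcases h with h | h
      · exact h
      · exact absurd hp h
    simp only [if_neg hr]
    exact ⟨_, nextConfig_inv_some hp (by simpa [hr] using allowed_compete hr (C.hist r))⟩
  | some op =>
    cases hret : A.ret r (C.loc r) with
    | some v => exact ⟨_, nextConfig_res_some hp hret⟩
    | none => exact ⟨_, nextConfig_step_some hp hret⟩

/-- A process has at most one enabled event: any enabled event is `llNextEvent`. -/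
theorem enabled_eq_llNextEvent {C D : Config A} {e : Event n (LLContestSpec n)}
    (h : nextConfig A C e = some D) : e = llNextEvent A C e.proc := by
  cases e with
  | inv i op =>
    obtain ⟨hp, hall, -⟩ := nextConfig_inv_inversion h
    unfold llNextEvent
    simp only [Event.proc, hp]
    cases op with
    | compete =>
      have hi : i.val ≠ 0 := by
        simpa [LLContestSpec, bne_iff_ne] using hall
      simp [hi]
    | decide =>
      have hi : i.val = 0 := by
        simp only [LLContestSpec, Bool.and_eq_true, beq_iff_eq] at hall
        exact hall.1
      simp [hi]
  | res i r =>
    obtain ⟨⟨op, hp⟩, hret, -⟩ := nextConfig_res_inversion h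
    unfold llNextEvent
    simp only [Event.proc, hp, hret]
  | step i =>
    obtain ⟨⟨op, hp⟩, hret, -⟩ := nextConfig_step_inversion h
    unfold llNextEvent
    simp only [Event.proc, hp, hret]

end LLNext


/-! #### Scheduled runs of competitors -/

section Runs

variable {M : ι → BaseObject} (A : Impl n (LLContestSpec n) ι M)

/-- The next event of process `r` after execution `β` (dummy if `β` is not an
execution). -/
noncomputable def evAt (β : List (Event n (LLContestSpec n))) (r : Fin n) :
    Event n (LLContestSpec n) :=
  match execConfig A β with
  | some C => llNextEvent A C r
  | none => Event.step r

theorem evAt_proc (β : List (Event n (LLContestSpec n))) (r : Fin n) :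
    (evAt A β r).proc = r := by
  unfold evAt
  cases execConfig A β with
  | none => rfl
  | some C => exact llNextEvent_proc C r

theorem evAt_of_config {β : List (Event n (LLContestSpec n))} {C : Config A}
    (h : execConfig A β = some C) (r : Fin n) : evAt A β r = llNextEvent A C r := by
  unfold evAt; rw [h]

/-- Run from `α`, at each step the process chosen by the policy `f` takes its next
step. -/
noncomputable def runE (f : List (Event n (LLContestSpec n)) → Fin n)
    (α : List (Event n (LLContestSpec n))) : ℕ → List (Event n (LLContestSpec n))
  | 0 => α
  | k+1 => runE f α k ++ [evAt A (runE f α k) (f (runE f α k))]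

/-- The events of the run, as an infinite sequence. -/
noncomputable def runEv (f : List (Event n (LLContestSpec n)) → Fin n)
    (α : List (Event n (LLContestSpec n))) (m : ℕ) : Event n (LLContestSpec n) :=
  evAt A (runE A f α m) (f (runE A f α m))

theorem runE_succ (f : List (Event n (LLContestSpec n)) → Fin n)
    (α : List (Event n (LLContestSpec n))) (k : ℕ) :
    runE A f α (k+1) = runE A f α k ++ [runEv A f α k] := rfl

theorem runE_eq_pref (f : List (Event n (LLContestSpec n)) → Fin n)
    (α : List (Event n (LLContestSpec n))) (m : ℕ) :
    runE A f α m = α ++ prefE (runEv A f α) m := by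
  induction m with
  | zero => simp [runE, prefE_zero]
  | succ k ih => rw [runE_succ, prefE_succ, ih, List.append_assoc]

theorem runEv_proc (f : List (Event n (LLContestSpec n)) → Fin n)
    (α : List (Event n (LLContestSpec n))) (m : ℕ) :
    (runEv A f α m).proc = f (runE A f α m) := evAt_proc A _ _

theorem runE_exec {f : List (Event n (LLContestSpec n)) → Fin n}
    {α : List (Event n (LLContestSpec n))} (hα : IsExec A α)
    (hf : ∀ β, (f β).val ≠ 0) (m : ℕ) : IsExec A (runE A f α m) := by
  induction m with
  | zero => exact hα
  | succ k ih =>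
    rw [runE_succ]
    unfold IsExec at ih ⊢
    rw [execConfig_snoc]
    cases hC : execConfig A (runE A f α k) with
    | none => rw [hC] at ih; simp at ih
    | some C =>
      obtain ⟨D, hD⟩ := llNextEvent_enabled (A := A) (C := C) (r := f (runE A f α k))
        (Or.inl (hf _))
      unfold runEv
      rw [evAt_of_config A hC]
      simp [hD]

/-- Applying closedness of `η` to the run scheduled by `f`. -/
theorem closed_run {L : List (Event n (LLContestSpec n)) → List (ℕ × (LLContestSpec n).Res)}
    {η : List (Event n (LLContestSpec n))} (hcl : ClosedExec A L η) (hη : IsExec A η)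
    (f : List (Event n (LLContestSpec n)) → Fin n) (hf : ∀ β, (f β).val ≠ 0) :
    ∃ m x, DecidesVal L (runE A f η m) x := by
  obtain ⟨m, x, hx⟩ := hcl (runEv A f η)
    (fun m => by rw [runEv_proc]; exact hf _)
    (fun m => by rw [← runE_eq_pref]; exact runE_exec A hη hf m)
  exact ⟨m, x, by rwa [runE_eq_pref A f η m]⟩

theorem llNextEvent_congr {C C' : Config A} {r : Fin n}
    (hp : C.pend r = C'.pend r) (hl : C.loc r = C'.loc r) :
    llNextEvent A C r = llNextEvent A C' r := by
  unfold llNextEvent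
  rw [hp, hl]

/-- Two runs of the same solo schedule from configurations agreeing except at `p`
produce identical event sequences and stay in agreement. -/
theorem solo_parallel {p q : Fin n} (hqp : q ≠ p) (hq : q.val ≠ 0)
    {η₁ η₂ : List (Event n (LLContestSpec n))} {C₁ C₂ : Config A}
    (h₁ : execConfig A η₁ = some C₁) (h₂ : execConfig A η₂ = some C₂)
    (hag : AgreeExc p C₁ C₂) : ∀ m,
    ∃ D₁ D₂, execConfig A (runE A (fun _ => q) η₁ m) = some D₁ ∧
      execConfig A (runE A (fun _ => q) η₂ m) = some D₂ ∧ AgreeExc p D₁ D₂ ∧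
      prefE (runEv A (fun _ => q) η₁) m = prefE (runEv A (fun _ => q) η₂) m := by
  intro m
  induction m with
  | zero => exact ⟨C₁, C₂, h₁, h₂, hag, rfl⟩
  | succ k ih =>
    obtain ⟨D₁, D₂, hD₁, hD₂, hagD, hpref⟩ := ih
    have hqq := (hagD.2 q hqp)
    have hev : llNextEvent A D₁ q = llNextEvent A D₂ q :=
      llNextEvent_congr A hqq.2.1 hqq.1
    obtain ⟨D₁', hD₁'⟩ := llNextEvent_enabled (A := A) (C := D₁) (r := q) (Or.inl hq)
    obtain ⟨D₂', hD₂', hagD'⟩ := bisim_next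
      (C' := D₂) hD₁' (by rw [llNextEvent_proc]; exact hqp) hagD
    rw [hev] at hD₂'
    refine ⟨D₁', D₂', ?_, ?_, hagD', ?_⟩
    · rw [runE_succ, execConfig_snoc, hD₁]
      unfold runEv
      rw [evAt_of_config A hD₁]
      simpa using hD₁'
    · rw [runE_succ, execConfig_snoc, hD₂]
      unfold runEv
      rw [evAt_of_config A hD₂]
      simpa using hD₂'
    · rw [prefE_succ, prefE_succ, hpref]
      unfold runEv
      rw [evAt_of_config A hD₁, evAt_of_config A hD₂, hev]

end Runs


/-! #### The referee invokes and completes at most one operation -/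

section Counts

/-- The event is an invocation by the referee (process with index 0). -/
def isInv0 {S : Spec n} : Event n S → Bool
  | Event.inv i _ => i.val == 0
  | _ => false

/-- The event is a response to the referee. -/
def isRes0 {S : Spec n} : Event n S → Bool
  | Event.res i _ => i.val == 0
  | _ => false

variable {M : ι → BaseObject} {A : Impl n (LLContestSpec n) ι M}

theorem counts_invariant {η : List (Event n (LLContestSpec n))} {C : Config A}
    {i : Fin n} (hi : i.val = 0) (h : execConfig A η = some C) :
    (C.hist i).length = η.countP isInv0 ∧
    η.countP isRes0 + ((C.pend i).elim 0 fun _ => 1) = η.countP isInv0 ∧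
    η.countP isInv0 ≤ 1 := by
  induction η using List.reverseRecOn generalizing C with
  | nil =>
    obtain rfl := Option.some.inj h
    simp [initConfig]
  | append_singleton η e ih =>
    rw [execConfig_snoc] at h
    cases hB : execConfig A η with
    | none => rw [hB] at h; simp at h
    | some B =>
      rw [hB, Option.bind_some] at h
      obtain ⟨ih1, ih2, ih3⟩ := ih hB
      rw [List.countP_append, List.countP_append]
      cases e with
      | inv j op =>
        have hcR : List.countP isRes0 [Event.inv j op] = 0 := by simp [isRes0]
        obtain ⟨hpend, hall, hm, hl, hp, hh⟩ := nextConfig_inv_inversion h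
        by_cases hj0 : j.val = 0
        · have hji : j = i := Fin.ext (hj0.trans hi.symm)
          subst hji
          have hcI : List.countP isInv0 [Event.inv j op] = 1 := by simp [isInv0, hj0]
          cases op with
          | compete => simp [LLContestSpec, hj0] at hall
          | decide =>
            simp only [LLContestSpec, Bool.and_eq_true, beq_iff_eq,
              List.isEmpty_iff] at hall
            have hhist0 : List.countP isInv0 η = 0 := by
              rw [← ih1, hall.2]; rfl
            rw [hcI, hcR, hhist0]
            refine ⟨?_, ?_, by omega⟩
            · rw [hh, Function.update_self, hall.2]; rfl
            · rw [hpend] at ih2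
              rw [hp, Function.update_self]
              simp only [Option.elim_none, Option.elim_some] at ih2 ⊢
              show List.countP isRes0 η + 0 + 1 = 0 + 1
              omega
        · have hji : i ≠ j := fun hc => hj0 (hc ▸ hi)
          have hcI : List.countP isInv0 [Event.inv j op] = 0 := by simp [isInv0, hj0]
          rw [hcI, hcR, hh, hp, Function.update_of_ne hji, Function.update_of_ne hji]
          exact ⟨by omega, by omega, by omega⟩
      | res j r =>
        have hcI : List.countP isInv0 [Event.res j r] = 0 := by simp [isInv0]
        obtain ⟨⟨op, hpend⟩, hret, hm, hl, hp, hh⟩ := nextConfig_res_inversion h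
        by_cases hj0 : j.val = 0
        · have hji : j = i := Fin.ext (hj0.trans hi.symm)
          subst hji
          have hcR : List.countP isRes0 [Event.res j r] = 1 := by simp [isRes0, hj0]
          rw [hcI, hcR, hh, hp, Function.update_self]
          rw [hpend] at ih2
          simp only [Option.elim_none, Option.elim_some] at ih2 ⊢
          exact ⟨by omega, by omega, by omega⟩
        · have hji : i ≠ j := fun hc => hj0 (hc ▸ hi)
          have hcR : List.countP isRes0 [Event.res j r] = 0 := by simp [isRes0, hj0]
          rw [hcI, hcR, hh, hp, Function.update_of_ne hji]
          exact ⟨by omega, by omega, by omega⟩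
      | step j =>
        have hcI : List.countP isInv0 ([Event.step j] : List (Event n (LLContestSpec n))) = 0 := by
          simp [isInv0]
        have hcR : List.countP isRes0 ([Event.step j] : List (Event n (LLContestSpec n))) = 0 := by
          simp [isRes0]
        obtain ⟨⟨op, hpend⟩, hret, hm, hl, hp, hh⟩ := nextConfig_step_inversion h
        rw [hcI, hcR, hh, hp]
        exact ⟨by omega, by omega, by omega⟩

theorem two_le_countP {X : Type*} {l : List X} {p : X → Bool} {j j' : ℕ} {a b : X}
    (hjj : j < j') (ha : l[j]? = some a) (hb : l[j']? = some b)
    (hpa : p a = true) (hpb : p b = true) : 2 ≤ l.countP p := by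
  have hsplit : l = l.take j' ++ l.drop j' := (List.take_append_drop j' l).symm
  have hj'len : j' < l.length := by
    by_contra hc
    rw [List.getElem?_eq_none (by omega)] at hb
    simp at hb
  have h1 : a ∈ l.take j' := by
    have : (l.take j')[j]? = some a := by
      rw [List.getElem?_take_of_lt hjj]; exact ha
    obtain ⟨hlt, rfl⟩ := List.getElem?_eq_some_iff.1 this
    exact List.getElem_mem hlt
  have h2 : b ∈ l.drop j' := by
    have : (l.drop j')[0]? = some b := by
      rw [List.getElem?_drop]
      simpa using hb
    obtain ⟨hlt, rfl⟩ := List.getElem?_eq_some_iff.1 this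
    exact List.getElem_mem hlt
  have c1 : 0 < (l.take j').countP p := List.countP_pos_iff.2 ⟨a, h1, hpa⟩
  have c2 : 0 < (l.drop j').countP p := List.countP_pos_iff.2 ⟨b, h2, hpb⟩
  calc 2 ≤ (l.take j').countP p + (l.drop j').countP p := by omega
  _ = l.countP p := by rw [← List.countP_append, ← hsplit]

theorem one_le_countP {X : Type*} {l : List X} {p : X → Bool} {j : ℕ} {a : X}
    (ha : l[j]? = some a) (hpa : p a = true) : 0 < l.countP p := by
  obtain ⟨hlt, rfl⟩ := List.getElem?_eq_some_iff.1 ha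
  exact List.countP_pos_iff.2 ⟨_, List.getElem_mem hlt, hpa⟩

theorem inv0_unique {η : List (Event n (LLContestSpec n))} (hη : IsExec A η)
    {j j' : ℕ} {i i' : Fin n} {op op' : (LLContestSpec n).Op} (hi : i.val = 0) (hi' : i'.val = 0)
    (hj : η[j]? = some (Event.inv i op)) (hj' : η[j']? = some (Event.inv i' op')) :
    j = j' := by
  obtain ⟨C, hC⟩ := Option.isSome_iff_exists.1 hη
  have hinv := (counts_invariant hi hC).2.2
  have hpa : isInv0 (Event.inv i op) = true := by simp [isInv0, hi]
  have hpb : isInv0 (Event.inv i' op') = true := by simp [isInv0, hi']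
  rcases lt_trichotomy j j' with h | h | h
  · exact absurd (two_le_countP h hj hj' hpa hpb) (by omega)
  · exact h
  · exact absurd (two_le_countP h hj' hj hpb hpa) (by omega)

theorem res0_unique {η : List (Event n (LLContestSpec n))} (hη : IsExec A η)
    {j j' : ℕ} {i i' : Fin n} {r r' : (LLContestSpec n).Res} (hi : i.val = 0)
    (hi' : i'.val = 0)
    (hj : η[j]? = some (Event.res i r)) (hj' : η[j']? = some (Event.res i' r')) :
    j = j' := by
  obtain ⟨C, hC⟩ := Option.isSome_iff_exists.1 hη
  obtain ⟨-, h2, h3⟩ := counts_invariant hi hC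
  have hR : η.countP isRes0 ≤ 1 := by
    have : (C.pend i).elim 0 (fun _ => 1) = 0 ∨ (C.pend i).elim 0 (fun _ => 1) = 1 := by
      cases C.pend i <;> simp
    omega
  have hpa : isRes0 (Event.res i r) = true := by simp [isRes0, hi]
  have hpb : isRes0 (Event.res i' r') = true := by simp [isRes0, hi']
  rcases lt_trichotomy j j' with h | h | h
  · exact absurd (two_le_countP h hj hj' hpa hpb) (by omega)
  · exact h
  · exact absurd (two_le_countP h hj' hj hpb hpa) (by omega)

theorem matches_of_res0 {η : List (Event n (LLContestSpec n))} (hη : IsExec A η)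
    {j k : ℕ} {i i' : Fin n} {op : (LLContestSpec n).Op} {r : (LLContestSpec n).Res}
    (hi : i.val = 0) (hi' : i'.val = 0) (hjk : j < k)
    (hj : η[j]? = some (Event.inv i op)) (hk : η[k]? = some (Event.res i' r)) :
    Matches η j k r := by
  have hii : i' = i := Fin.ext (hi'.trans hi.symm)
  rw [hii] at hk
  refine ⟨i, op, hj, hk, hjk, fun m hm1 hm2 r' hc => ?_⟩
  have := res0_unique hη hi hi hc hk
  omega

end Counts


/-! #### Valency lemmas -/

section WLemmas

variable {M : ι → BaseObject} {A : Impl n (LLContestSpec n) ι M}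
variable {L : List (Event n (LLContestSpec n)) → List (ℕ × (LLContestSpec n).Res)}

theorem competitorsOnly_nil : CompetitorsOnly (n := n) (S := LLContestSpec n) [] := by
  intro e he; simp at he

theorem competitorsOnly_append {β γ : List (Event n (LLContestSpec n))}
    (h : CompetitorsOnly β) (h' : CompetitorsOnly γ) : CompetitorsOnly (β ++ γ) := by
  intro e he
  rcases List.mem_append.1 he with he | he
  · exact h e he
  · exact h' e he

theorem competitorsOnly_take {β : List (Event n (LLContestSpec n))}
    (h : CompetitorsOnly β) (m : ℕ) : CompetitorsOnly (β.take m) :=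
  fun e he => h e (List.mem_of_mem_take he)

theorem competitorsOnly_prefE {E : ℕ → Event n (LLContestSpec n)}
    (h : ∀ m, (E m).proc.val ≠ 0) (m : ℕ) : CompetitorsOnly (prefE E m) := by
  intro e he
  obtain ⟨k, -, rfl⟩ := List.mem_map.1 he
  exact h k

theorem lin_prefix_mem (hL : PrefixClosedLin A L) {α β : List (Event n (LLContestSpec n))}
    (hexec : IsExec A (α ++ β)) {x : ℕ × (LLContestSpec n).Res} (hx : x ∈ L α) :
    x ∈ L (α ++ β) := by
  obtain ⟨t, ht⟩ := hL α β hexec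
  rw [← ht]
  exact List.mem_append_left t hx

theorem lin_pair_unique (hLin : IsLinFun A L) {η : List (Event n (LLContestSpec n))}
    (hη : IsExec A η) {j : ℕ} {a b : (LLContestSpec n).Res}
    (ha : (j, a) ∈ L η) (hb : (j, b) ∈ L η) : a = b := by
  have hnd := (hLin η hη).nodup
  have := List.inj_on_of_nodup_map hnd ha hb rfl
  exact congrArg Prod.snd this

theorem decidesVal_mono (hL : PrefixClosedLin A L)
    {η δ : List (Event n (LLContestSpec n))} {x : ℕ}
    (h : DecidesVal L η x) (hexec : IsExec A (η ++ δ)) : DecidesVal L (η ++ δ) x := by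
  obtain ⟨j, i, hi, hj, hmem⟩ := h
  have hlt : j < η.length := by
    by_contra hc
    rw [List.getElem?_eq_none (by omega)] at hj
    simp at hj
  refine ⟨j, i, hi, ?_, lin_prefix_mem hL hexec hmem⟩
  rw [List.getElem?_append]
  simp only [hlt, if_pos]
  exact hj

theorem decPos_in_prefix {η β : List (Event n (LLContestSpec n))}
    (hco : CompetitorsOnly β) {j : ℕ} {i : Fin n} {op : (LLContestSpec n).Op}
    (hj : (η ++ β)[j]? = some (Event.inv i op)) (hi : i.val = 0) :
    j < η.length ∧ η[j]? = some (Event.inv i op) := by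
  by_cases hlt : j < η.length
  · refine ⟨hlt, ?_⟩
    rw [List.getElem?_append] at hj
    simpa only [hlt, if_pos] using hj
  · exfalso
    rw [List.getElem?_append_right (by omega)] at hj
    obtain ⟨hb, heq⟩ := List.getElem?_eq_some_iff.1 hj
    have := hco _ (heq ▸ List.getElem_mem hb)
    simp [Event.proc, hi] at this

theorem Wset_sub_extend {α γ : List (Event n (LLContestSpec n))}
    (hγ : CompetitorsOnly γ) : Wset A L (α ++ γ) ⊆ Wset A L α := by
  rintro x ⟨β, hco, hex, hdec⟩
  rw [List.append_assoc] at hex hdec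
  exact ⟨γ ++ β, competitorsOnly_append hγ hco, hex, hdec⟩

theorem W_mem_of_decided {η' : List (Event n (LLContestSpec n))} (hη : IsExec A η')
    {x : ℕ} (h : DecidesVal L η' x) : x ∈ Wset A L η' := by
  exact ⟨[], competitorsOnly_nil, by simpa using hη, by simpa using h⟩

theorem W_sub_of_decided (hLin : IsLinFun A L) (hL : PrefixClosedLin A L)
    {η : List (Event n (LLContestSpec n))} (hη : IsExec A η)
    {j : ℕ} {i : Fin n} {v : ℕ} (hi : i.val = 0)
    (hj : η[j]? = some (Event.inv i ContestOp.decide))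
    (hmem : ((j, some v) : ℕ × (LLContestSpec n).Res) ∈ L η) :
    Wset A L η ⊆ {v} := by
  rintro x ⟨β, hco, hex, j', i', hi', hj', hm'⟩
  have hlt : j < η.length := by
    by_contra hc
    rw [List.getElem?_eq_none (by omega)] at hj
    simp at hj
  have hjlift : (η ++ β)[j]? = some (Event.inv i ContestOp.decide) := by
    rw [List.getElem?_append]
    simpa only [hlt, if_pos] using hj
  have hjj : j' = j := inv0_unique hex hi' hi hj' hjlift
  subst hjj
  have hvlift := lin_prefix_mem hL hex hmem
  exact Option.some.inj (lin_pair_unique hLin hex hm' hvlift)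

theorem closed_nonempty (hL : PrefixClosedLin A L)
    {η : List (Event n (LLContestSpec n))} (hη : IsExec A η)
    (hcl : ClosedExec A L η) {q : Fin n} (hq : q.val ≠ 0) :
    ∃ x, x ∈ Wset A L η ∧
      ∃ β, CompetitorsOnly β ∧ IsExec A (η ++ β) ∧ DecidesVal L (η ++ β) x := by
  obtain ⟨m, x, hx⟩ := closed_run A hcl hη (fun _ => q) (fun _ => hq)
  rw [runE_eq_pref] at hx
  have hco : CompetitorsOnly (prefE (runEv A (fun _ => q) η) m) :=
    competitorsOnly_prefE (fun k => by rw [runEv_proc]; exact hq) m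
  have hex : IsExec A (η ++ prefE (runEv A (fun _ => q) η) m) := by
    rw [← runE_eq_pref]
    exact runE_exec A hη (fun _ => hq) m
  exact ⟨x, ⟨_, hco, hex, hx⟩, _, hco, hex, hx⟩

end WLemmas


/-! #### The form of the decide response, and completed decides -/

section DecideForm

variable {M : ι → BaseObject} {A : Impl n (LLContestSpec n) ι M}
variable {L : List (Event n (LLContestSpec n)) → List (ℕ × (LLContestSpec n).Res)}

theorem forall₂_mem_left {X Y : Type*} {R : X → Y → Prop} {l1 : List X} {l2 : List Y}
    (h : List.Forall₂ R l1 l2) {a : X} (ha : a ∈ l1) : ∃ b ∈ l2, R a b := by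
  induction h with
  | nil => simp at ha
  | cons hr ht ih =>
    rcases List.mem_cons.1 ha with rfl | ha
    · exact ⟨_, List.mem_cons_self, hr⟩
    · obtain ⟨b, hb, hrb⟩ := ih ha
      exact ⟨b, List.mem_cons_of_mem _ hb, hrb⟩

theorem seqRun_mem {S : Spec n} {s : S.State} {l : List (Fin n × S.Op × S.Res)}
    (h : SeqRun S s l) : ∀ e ∈ l, ∃ s1 s2, S.δ s1 e.1 e.2.1 s2 e.2.2 := by
  induction h with
  | nil => intro e he; simp at he
  | cons hδ hrun ih =>
    intro e he
    rcases List.mem_cons.1 he with rfl | he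
    · exact ⟨_, _, hδ⟩
    · exact ih e he

theorem decide_res_form (hLin : IsLinFun A L) {η : List (Event n (LLContestSpec n))}
    (hη : IsExec A η) {j : ℕ} {i : Fin n}
    (hj : η[j]? = some (Event.inv i ContestOp.decide)) {r : (LLContestSpec n).Res}
    (hmem : (j, r) ∈ L η) : ∃ x : ℕ, r = some x := by
  obtain ⟨l, hfa, hrun⟩ := (hLin η hη).valid
  obtain ⟨e, hel, hrel⟩ := forall₂_mem_left hfa hmem
  obtain ⟨hinv, hr⟩ := hrel
  rw [hj] at hinv
  obtain ⟨-, hop⟩ := Event.inv.inj (Option.some.inj hinv)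
  obtain ⟨s1, s2, hδ⟩ := seqRun_mem hrun e hel
  rcases hδ with ⟨hcomp, -⟩ | ⟨-, -, -, -, -, x, hx, -⟩
  · rw [← hop] at hcomp; exact absurd hcomp (by simp)
  · exact ⟨x, hr.trans hx⟩

theorem responded_of_pend_none (hLin : IsLinFun A L)
    {η : List (Event n (LLContestSpec n))} {C : Config A}
    (hC : execConfig A η = some C) {i : Fin n} (hi : i.val = 0)
    (hpend : C.pend i = none) {j : ℕ}
    (hj : η[j]? = some (Event.inv i ContestOp.decide)) :
    ∃ v : ℕ, ((j, some v) : ℕ × (LLContestSpec n).Res) ∈ L η := by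
  have hη : IsExec A η := by rw [IsExec, hC]; rfl
  obtain ⟨h1, h2, h3⟩ := counts_invariant hi hC
  have hI1 : η.countP isInv0 = 1 := by
    have := one_le_countP (p := isInv0) hj (by simp [isInv0, hi])
    omega
  rw [hpend] at h2
  have h2' : η.countP isRes0 = η.countP isInv0 := by simpa using h2
  have hpos : 0 < η.countP isRes0 := by omega
  obtain ⟨e, hel, hpe⟩ := List.countP_pos_iff.1 hpos
  cases e with
  | inv i2 op2 => simp [isRes0] at hpe
  | step i2 => simp [isRes0] at hpe
  | res i2 r2 =>
    have hi2 : i2.val = 0 := by simpa [isRes0] using hpe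
    obtain ⟨k, hklen, hkeq⟩ := List.mem_iff_getElem.1 hel
    have hk : η[k]? = some (Event.res i2 r2) := by
      rw [List.getElem?_eq_getElem hklen, hkeq]
    -- the decide was invoked before position k
    have htk0 : IsExec A (η.take k) := isExec_of_prefix (List.take_prefix _ _) hη
    have htk : IsExec A (η.take (k+1)) := isExec_of_prefix (List.take_prefix _ _) hη
    have hsplit : η.take (k+1) = η.take k ++ [Event.res i2 r2] := by
      rw [List.take_succ, hk]
      rfl
    obtain ⟨B, hB⟩ := Option.isSome_iff_exists.1 htk0
    obtain ⟨C2, hC2⟩ := Option.isSome_iff_exists.1 htk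
    rw [hsplit, execConfig_snoc, hB, Option.bind_some] at hC2
    obtain ⟨⟨op2, hpend2⟩, -, -⟩ := nextConfig_res_inversion hC2
    obtain ⟨g1, g2, g3⟩ := counts_invariant hi2 hB
    rw [hpend2] at g2
    simp only [Option.elim_some] at g2
    have gpos : 0 < (η.take k).countP isInv0 := by omega
    obtain ⟨e2, he2, hpe2⟩ := List.countP_pos_iff.1 gpos
    cases e2 with
    | res i3 r3 => simp [isInv0] at hpe2
    | step i3 => simp [isInv0] at hpe2
    | inv i3 op3 =>
      have hi3 : i3.val = 0 := by simpa [isInv0] using hpe2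
      obtain ⟨j2, hj2len, hj2eq⟩ := List.mem_iff_getElem.1 he2
      have hj2k : j2 < k := lt_of_lt_of_le hj2len (by rw [List.length_take]; omega)
      have hj2 : η[j2]? = some (Event.inv i3 op3) := by
        rw [← List.getElem?_take_of_lt hj2k, List.getElem?_eq_getElem hj2len, hj2eq]
      have hjj2 : j2 = j := inv0_unique hη hi3 hi hj2 hj
      have hjk : j < k := by omega
      have hmt := matches_of_res0 hη hi hi2 hjk hj hk
      have hmem := (hLin η hη).complete_mem j k r2 hmt
      obtain ⟨v, hv⟩ := decide_res_form hLin hη hj hmem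
      exact ⟨v, hv ▸ hmem⟩

/-- Bivalence of the competitors-valency. -/
def Biv (A : Impl n (LLContestSpec n) ι M)
    (L : List (Event n (LLContestSpec n)) → List (ℕ × (LLContestSpec n).Res))
    (η : List (Event n (LLContestSpec n))) : Prop :=
  ∃ x y, x ∈ Wset A L η ∧ y ∈ Wset A L η ∧ x ≠ y

theorem mem_W_decPos {η : List (Event n (LLContestSpec n))} {x : ℕ}
    (hx : x ∈ Wset A L η) :
    ∃ (j : ℕ) (i : Fin n), i.val = 0 ∧ η[j]? = some (Event.inv i ContestOp.decide) := by
  obtain ⟨β, hco, hex, j, i, hi, hj, -⟩ := hx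
  obtain ⟨-, hj'⟩ := decPos_in_prefix hco hj hi
  exact ⟨j, i, hi, hj'⟩

theorem biv_pend_some (hLin : IsLinFun A L) (hL : PrefixClosedLin A L)
    {η : List (Event n (LLContestSpec n))} {C : Config A}
    (hC : execConfig A η = some C) (hbiv : Biv A L η) {i : Fin n} (hi : i.val = 0) :
    ∃ op, C.pend i = some op := by
  have hη : IsExec A η := by rw [IsExec, hC]; rfl
  obtain ⟨x, y, hx, hy, hxy⟩ := hbiv
  obtain ⟨j, i', hi', hj⟩ := mem_W_decPos hx
  have hii : i' = i := Fin.ext (hi'.trans hi.symm)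
  rw [hii] at hj
  cases hp : C.pend i with
  | some op => exact ⟨op, rfl⟩
  | none =>
    exfalso
    obtain ⟨v, hv⟩ := responded_of_pend_none hLin hC hi hp hj
    have hsub := W_sub_of_decided hLin hL hη hi hj hv
    have := (hsub hx).trans (hsub hy).symm
    exact hxy this

end DecideForm


/-! #### Closedness is preserved by competitors-only extensions -/

section ClosedExtend

variable {M : ι → BaseObject} {A : Impl n (LLContestSpec n) ι M}
variable {L : List (Event n (LLContestSpec n)) → List (ℕ × (LLContestSpec n).Res)}

theorem closed_extend (hL : PrefixClosedLin A L) {α β : List (Event n (LLContestSpec n))}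
    (hcl : ClosedExec A L α) (hco : CompetitorsOnly β) (hex : IsExec A (α ++ β)) :
    ClosedExec A L (α ++ β) := by
  intro E' hproc hexec
  classical
  set E'' : ℕ → Event n (LLContestSpec n) :=
    fun m => if h : m < β.length then β.getD m (E' 0) else E' (m - β.length) with hE''
  have hgetD : ∀ m, m < β.length → β[m]? = some (β.getD m (E' 0)) := by
    intro m hm
    rw [List.getElem?_eq_getElem hm, List.getD_eq_getElem β _ hm]
  have hpref : ∀ m, (m ≤ β.length → prefE E'' m = β.take m) ∧
      (β.length ≤ m → prefE E'' m = β ++ prefE E' (m - β.length)) := by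
    intro m
    induction m with
    | zero =>
      refine ⟨fun _ => by simp [prefE_zero], fun h0 => ?_⟩
      have : β = [] := List.eq_nil_of_length_eq_zero (by omega)
      simp [this, prefE_zero]
    | succ m ih =>
      constructor
      · intro hm1
        have hm : m < β.length := by omega
        rw [prefE_succ, (ih.1 (by omega)), List.take_succ, hgetD m hm]
        have : E'' m = β.getD m (E' 0) := by rw [hE'']; exact dif_pos hm
        rw [this]
        rfl
      · intro hm1
        rcases Nat.lt_or_ge m β.length with hm | hm
        · -- β.length = m + 1
          have hlen : β.length = m + 1 := by omega
          rw [prefE_succ, (ih.1 (by omega))]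
          have hE : E'' m = β.getD m (E' 0) := dif_pos hm
          rw [hE]
          have h1 : β.take m ++ [β.getD m (E' 0)] = β.take (m+1) := by
            rw [List.take_succ, hgetD m hm]; rfl
          rw [h1, ← hlen, List.take_length, Nat.sub_self, prefE_zero, List.append_nil]
        · have hE : E'' m = E' (m - β.length) := dif_neg (by omega)
          rw [prefE_succ, ih.2 hm, hE, List.append_assoc, ← prefE_succ]
          have : m - β.length + 1 = m + 1 - β.length := by omega
          rw [this]
  have hexec'' : ∀ m, IsExec A (α ++ prefE E'' m) := by
    intro m
    rcases le_or_gt m β.length with hm | hm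
    · rw [(hpref m).1 hm]
      refine isExec_of_prefix ⟨β.drop m, ?_⟩ hex
      rw [List.append_assoc, List.take_append_drop]
    · rw [(hpref m).2 (by omega), ← List.append_assoc]
      exact hexec (m - β.length)
  have hproc'' : ∀ m, (Event.proc (E'' m)).val ≠ 0 := by
    intro m
    by_cases hm : m < β.length
    · have hE : E'' m = β.getD m (E' 0) := dif_pos hm
      rw [hE]
      refine hco _ ?_
      rw [List.getD_eq_getElem β (E' 0) hm]
      exact List.getElem_mem hm
    · have hE : E'' m = E' (m - β.length) := dif_neg hm
      rw [hE]; exact hproc _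
  obtain ⟨m, x, hx⟩ := hcl E'' hproc'' hexec''
  rcases le_or_gt m β.length with hm | hm
  · rw [(hpref m).1 hm] at hx
    refine ⟨0, x, ?_⟩
    rw [prefE_zero, List.append_nil]
    have h2 := decidesVal_mono hL hx
      (by rw [List.append_assoc, List.take_append_drop]; exact hex)
    rwa [List.append_assoc, List.take_append_drop] at h2
  · rw [(hpref m).2 (by omega)] at hx
    refine ⟨m - β.length, x, ?_⟩
    rwa [← List.append_assoc] at hx

end ClosedExtend


/-! #### A pending referee operation can be run to completion -/

section RefereeRun

variable {M : ι → BaseObject} {A : Impl n (LLContestSpec n) ι M}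

theorem step_preserves_pend {C D : Config A} {i : Fin n}
    (h : nextConfig A C (Event.step i) = some D) : D.pend = C.pend :=
  (nextConfig_step_inversion h).2.2.2.2.1

theorem referee_completes (hwf : WaitFree A) {η : List (Event n (LLContestSpec n))}
    {C : Config A} (hC : execConfig A η = some C) {i : Fin n}
    {op : (LLContestSpec n).Op} (hpend : C.pend i = some op) :
    ∃ (k : ℕ) (r : (LLContestSpec n).Res),
      IsExec A (η ++ (List.replicate k (Event.step i) ++ [Event.res i r])) := by
  classical
  set g : ℕ → Option (Config A) :=
    fun k => execConfig A (η ++ List.replicate k (Event.step i)) with hg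
  have hg0 : g 0 = some C := by rw [hg]; simpa using hC
  have hgsucc : ∀ k, g (k+1) = (g k).bind (fun D => nextConfig A D (Event.step i)) := by
    intro k
    rw [hg]
    simp only [List.replicate_succ' (n := k) (a := Event.step i), ← List.append_assoc]
    exact execConfig_snoc A _ _
  -- the good-prefix property
  set Q : ℕ → Prop := fun k => ∀ j ≤ k, ∃ D, g j = some D ∧
      (∃ o, D.pend i = some o) ∧ A.ret i (D.loc i) = none with hQ
  by_cases hall : ∀ k, Q k
  ·
    exfalso
    set E : ℕ → Event n (LLContestSpec n) :=
      fun m => if m < η.length then η.getD m (Event.step i) else Event.step i with hE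
    have hgetD : ∀ m, m < η.length → η[m]? = some (η.getD m (Event.step i)) := by
      intro m hm
      rw [List.getElem?_eq_getElem hm, List.getD_eq_getElem η _ hm]
    have hpref : ∀ m, (m ≤ η.length → prefE E m = η.take m) ∧
        (η.length ≤ m → prefE E m = η ++ List.replicate (m - η.length) (Event.step i)) := by
      intro m
      induction m with
      | zero =>
        refine ⟨fun _ => by simp [prefE_zero], fun h0 => ?_⟩
        have : η = [] := List.eq_nil_of_length_eq_zero (by omega)
        simp [this, prefE_zero]
      | succ m ih =>
        constructor
        · intro hm1
          have hm : m < η.length := by omega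
          rw [prefE_succ, (ih.1 (by omega)), List.take_succ, hgetD m hm]
          have : E m = η.getD m (Event.step i) := if_pos hm
          rw [this]
          rfl
        · intro hm1
          rcases Nat.lt_or_ge m η.length with hm | hm
          · have hlen : η.length = m + 1 := by omega
            rw [prefE_succ, (ih.1 (by omega))]
            have hEm : E m = η.getD m (Event.step i) := if_pos hm
            rw [hEm]
            have h1 : η.take m ++ [η.getD m (Event.step i)] = η.take (m+1) := by
              rw [List.take_succ, hgetD m hm]; rfl
            rw [h1, ← hlen, List.take_length, Nat.sub_self]
            simp
          · have hEm : E m = Event.step i := if_neg (by omega)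
            rw [prefE_succ, ih.2 hm, hEm, List.append_assoc,
              ← List.replicate_succ' (n := m - η.length) (a := Event.step i),
              show m - η.length + 1 = m + 1 - η.length by omega]
    have hexecs : ∀ m, IsExec A (prefE E m) := by
      intro m
      rcases le_or_gt m η.length with hm | hm
      · rw [(hpref m).1 hm]
        exact isExec_of_prefix (List.take_prefix _ _) (by rw [IsExec, hC]; rfl)
      · rw [(hpref m).2 (by omega)]
        obtain ⟨D, hD, -, -⟩ := hall (m - η.length) (m - η.length) le_rfl
        have hgk : execConfig A (η ++ List.replicate (m - η.length) (Event.step i)) = some D := hD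
        rw [IsExec, hgk]; rfl
    have hsteps : ∀ m, ∃ m', m ≤ m' ∧ E m' = Event.step i := by
      intro m
      refine ⟨max m η.length, le_max_left _ _, if_neg (by omega)⟩
    obtain ⟨m', hm', r, hr⟩ := hwf E hexecs i
      (fun m => hsteps m) η.length
    have : E m' = Event.step i := if_neg (by omega)
    rw [hr] at this
    cases this
  · push_neg at hall
    have hex : ∃ k, ¬ Q k := hall
    set k0 := Nat.find hex with hk0
    have hnQ : ¬ Q k0 := Nat.find_spec hex
    have hgood : ∃ D, g k0 = some D ∧ ∃ o, D.pend i = some o := by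
      cases hk : k0 with
      | zero => exact ⟨C, hg0, op, hpend⟩
      | succ m =>
        have hQm : Q m := by
          by_contra hc
          have := Nat.find_le (h := hex) hc
          omega
        obtain ⟨D, hD, ⟨o, ho⟩, hret⟩ := hQm m le_rfl
        obtain ⟨D', hD'⟩ := Option.isSome_iff_exists.1
          (by rw [nextConfig_step_some ho hret]; rfl :
            (nextConfig A D (Event.step i)).isSome = true)
        refine ⟨D', by rw [hgsucc, hD, Option.bind_some]; exact hD', ?_⟩
        rw [step_preserves_pend hD']
        exact ⟨o, ho⟩
    obtain ⟨D, hD, o, ho⟩ := hgood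
    have hretD : A.ret i (D.loc i) ≠ none := by
      intro hc
      apply hnQ
      intro j hj
      rcases Nat.lt_or_ge j k0 with hjlt | hjge
      · cases hk : k0 with
        | zero => omega
        | succ m =>
          have hQm : Q m := by
            by_contra hcq
            have := Nat.find_le (h := hex) hcq
            omega
          exact hQm j (by omega)
      · have : j = k0 := by omega
        rw [this]
        exact ⟨D, hD, ⟨o, ho⟩, hc⟩
    obtain ⟨r, hr⟩ := Option.ne_none_iff_exists'.1 hretD
    refine ⟨k0, r, ?_⟩
    have hgk : execConfig A (η ++ List.replicate k0 (Event.step i)) = some D := hD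
    rw [← List.append_assoc, IsExec, execConfig_snoc, hgk, Option.bind_some,
      nextConfig_res_some ho hr]
    rfl

end RefereeRun


/-! #### The key indistinguishability lemma -/

section MainLemma

variable {M : ι → BaseObject} {A : Impl n (LLContestSpec n) ι M}
variable {L : List (Event n (LLContestSpec n)) → List (ℕ × (LLContestSpec n).Res)}

theorem runE_prefix (f : List (Event n (LLContestSpec n)) → Fin n)
    (η : List (Event n (LLContestSpec n))) {a b : ℕ} (hab : a ≤ b) :
    runE A f η a <+: runE A f η b := by
  induction b with
  | zero =>
    have : a = 0 := by omega
    subst this; exact List.prefix_refl _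
  | succ b ih =>
    rcases Nat.lt_or_ge a (b+1) with hb | hb
    · exact (ih (by omega)).trans ⟨[runEv A f η b], (runE_succ A f η b).symm⟩
    · have : a = b + 1 := by omega
      subst this; exact List.prefix_refl _

theorem W_mem_of_run (hL : PrefixClosedLin A L) {η : List (Event n (LLContestSpec n))}
    (hη : IsExec A η) {q : Fin n} (hq : q.val ≠ 0) {m : ℕ} {x : ℕ}
    (hx : DecidesVal L (runE A (fun _ => q) η m) x) : x ∈ Wset A L η := by
  rw [runE_eq_pref] at hx
  exact ⟨_, competitorsOnly_prefE (fun k => by rw [runEv_proc]; exact hq) m,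
    by rw [← runE_eq_pref]; exact runE_exec A hη (fun _ => hq) m, hx⟩

theorem main_agree (hn : 3 ≤ n) (hwf : WaitFree A) (hLin : IsLinFun A L)
    (hL : PrefixClosedLin A L) {p : Fin n} (hp : p.val ≠ 0)
    {η₁ η₂ : List (Event n (LLContestSpec n))} {C₁ C₂ : Config A}
    (h₁ : execConfig A η₁ = some C₁) (h₂ : execConfig A η₂ = some C₂)
    (hcl₁ : ClosedExec A L η₁) (hcl₂ : ClosedExec A L η₂)
    (hag : AgreeExc p C₁ C₂)
    {i0 : Fin n} (hi0 : i0.val = 0) {op0 : (LLContestSpec n).Op}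
    (hpend : C₁.pend i0 = some op0)
    {x y : ℕ} (hWx : Wset A L η₁ ⊆ {x}) (hWy : Wset A L η₂ ⊆ {y}) : x = y := by
  have hη₁ : IsExec A η₁ := by rw [IsExec, h₁]; rfl
  have hη₂ : IsExec A η₂ := by rw [IsExec, h₂]; rfl
  -- pick a competitor `q` different from `p`
  set q : Fin n := if p.val = 1 then ⟨2, by omega⟩ else ⟨1, by omega⟩ with hqdef
  have hq0 : q.val ≠ 0 := by
    rw [hqdef]; split <;> simp
  have hqp : q ≠ p := by
    intro hc
    rw [hqdef] at hc
    by_cases h1 : p.val = 1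
    · rw [if_pos h1] at hc
      rw [← hc] at h1; simp at h1
    · rw [if_neg h1] at hc
      rw [← hc] at h1; simp at h1
  have hi0p : i0 ≠ p := fun hc => hp (hc ▸ hi0)
  have hi0q : q ≠ i0 := fun hc => hq0 (hc ▸ hi0 ▸ rfl)
  -- run `q` solo from both executions; both eventually decide
  obtain ⟨m₁, x₁, hx₁⟩ := closed_run A hcl₁ hη₁ (fun _ => q) (fun _ => hq0)
  obtain ⟨m₂, y₁, hy₁⟩ := closed_run A hcl₂ hη₂ (fun _ => q) (fun _ => hq0)
  have hx₁x : x₁ = x := hWx (W_mem_of_run hL hη₁ hq0 hx₁)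
  have hy₁y : y₁ = y := hWy (W_mem_of_run hL hη₂ hq0 hy₁)
  rw [hx₁x] at hx₁
  rw [hy₁y] at hy₁
  set m := max m₁ m₂ with hm
  -- extend both decide facts to step `m`
  have hdx : DecidesVal L (runE A (fun _ => q) η₁ m) x := by
    obtain ⟨δ, hδ⟩ := runE_prefix (A := A) (fun _ => q) η₁ (le_max_left m₁ m₂)
    rw [← hδ]
    exact decidesVal_mono hL hx₁ (by rw [hδ]; exact runE_exec A hη₁ (fun _ => hq0) m)
  have hdy : DecidesVal L (runE A (fun _ => q) η₂ m) y := by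
    obtain ⟨δ, hδ⟩ := runE_prefix (A := A) (fun _ => q) η₂ (le_max_right m₁ m₂)
    rw [← hδ]
    exact decidesVal_mono hL hy₁ (by rw [hδ]; exact runE_exec A hη₂ (fun _ => hq0) m)
  -- the two runs are parallel
  obtain ⟨D₁, D₂, hD₁, hD₂, hagD, hprefeq⟩ := solo_parallel A hqp hq0 h₁ h₂ hag m
  set ξ₁ := runE A (fun _ => q) η₁ m with hξ₁
  set ξ₂ := runE A (fun _ => q) η₂ m with hξ₂
  -- the referee operation is still pending after the solo run
  have hpendD₁ : D₁.pend i0 = some op0 := by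
    have hsplit : execConfig A (η₁ ++ prefE (runEv A (fun _ => q) η₁) m) = some D₁ := by
      rw [← runE_eq_pref]; exact hD₁
    rw [execConfig_append, h₁, Option.bind_some] at hsplit
    have := foldl_avoid hsplit (j := i0)
      (fun e he => by
        have : e.proc = q := by
          obtain ⟨k, -, rfl⟩ := List.mem_map.1 he
          exact runEv_proc A _ _ _
        rw [this]; exact hi0q)
    rw [this.2.1, hpend]
  -- run the referee to completion after `ξ₁`
  obtain ⟨k, r, hexec₁⟩ := referee_completes hwf hD₁ hpendD₁
  set γ := List.replicate k (Event.step i0) ++ [Event.res i0 r] with hγ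
  have hγproc : ∀ e ∈ γ, e.proc = i0 := by
    intro e he
    rw [hγ] at he
    rcases List.mem_append.1 he with he | he
    · rw [List.eq_of_mem_replicate he]; rfl
    · rw [List.mem_singleton.1 he]; rfl
  -- transfer executability of `γ` to `ξ₂` via bisimulation
  obtain ⟨F₁, hF₁⟩ : ∃ F₁, γ.foldlM (fun C e => nextConfig A C e) D₁ = some F₁ := by
    have := hexec₁
    rw [IsExec, execConfig_append, hD₁, Option.bind_some] at this
    exact Option.isSome_iff_exists.1 this
  obtain ⟨F₂, hF₂, -⟩ := bisim_list hF₁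
    (fun e he => by rw [hγproc e he]; exact hi0p) hagD
  have hexec₂ : IsExec A (ξ₂ ++ γ) := by
    rw [IsExec, execConfig_append, hD₂, Option.bind_some, hF₂]; rfl
  have hexec₁' : IsExec A (ξ₁ ++ γ) := hexec₁
  -- positions of the response in both extended executions
  have hγlen : γ.length = k + 1 := by rw [hγ]; simp
  have hγres : γ[k]? = some (Event.res i0 r) := by
    rw [hγ, List.getElem?_append_right (by simp), List.length_replicate]
    simp
  -- generic: extract the value forced on the decide operation
  have force : ∀ (ξ : List (Event n (LLContestSpec n))) (z : ℕ),
      IsExec A (ξ ++ γ) → DecidesVal L ξ z → r = some z := by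
    intro ξ z hexec hdec
    obtain ⟨j, i', hi', hj, hmem⟩ := hdec
    have hjlt : j < ξ.length := by
      by_contra hc
      rw [List.getElem?_eq_none (by omega)] at hj
      simp at hj
    have hjlift : (ξ ++ γ)[j]? = some (Event.inv i' ContestOp.decide) := by
      rw [List.getElem?_append]
      simpa only [hjlt, if_pos] using hj
    have hkres : (ξ ++ γ)[ξ.length + k]? = some (Event.res i0 r) := by
      rw [List.getElem?_append_right (by omega)]
      simpa using hγres
    have hmt := matches_of_res0 hexec hi' hi0 (by omega) hjlift hkres
    have hrm := (hLin _ hexec).complete_mem _ _ _ hmt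
    have hxm := lin_prefix_mem hL hexec hmem
    exact lin_pair_unique hLin hexec hrm hxm
  have e1 := force ξ₁ x hexec₁' hdx
  have e2 := force ξ₂ y hexec₂ hdy
  rw [e1] at e2
  exact Option.some.inj e2

end MainLemma


/-! #### Memory update algebra and the absorbing cases -/

section UpdMem

variable {M : ι → BaseObject}

theorem updMem_self (mem : ∀ o, (M o).State) (o : ι) :
    updMem mem o (mem o) = mem := by
  funext o'
  by_cases h : o' = o
  · subst h; simp [updMem]
  · simp [updMem, h]

theorem updMem_overwrite (mem : ∀ o, (M o).State) (o : ι) (a b : (M o).State) :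
    updMem (updMem mem o a) o b = updMem mem o b := by
  funext o'
  by_cases h : o' = o
  · subst h; simp [updMem]
  · simp [updMem, h]

theorem updMem_comm (mem : ∀ o, (M o).State) {o o' : ι} (h : o ≠ o')
    (a : (M o).State) (b : (M o').State) :
    updMem (updMem mem o a) o' b = updMem (updMem mem o' b) o a := by
  funext o''
  by_cases h1 : o'' = o'
  · by_cases h2 : o'' = o
    · exact absurd (h2.symm.trans h1) h
    · subst h1; simp [updMem, h2, Ne.symm h]
  · by_cases h2 : o'' = o
    · subst h2; simp [updMem, h1, h]
    · simp [updMem, h1, h2]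

end UpdMem

section CaseAnalysis

variable {A : Impl n (LLContestSpec n) ι (fun _ => RWRegister)}
variable {L : List (Event n (LLContestSpec n)) → List (ℕ × (LLContestSpec n).Res)}

theorem competitorsOnly_singleton {e : Event n (LLContestSpec n)}
    (he : e.proc.val ≠ 0) : CompetitorsOnly [e] := by
  intro e' he'
  rw [List.mem_singleton.1 he']
  exact he

theorem W_sub_singleton_of_not_biv {η : List (Event n (LLContestSpec n))} {x : ℕ}
    (hx : x ∈ Wset A L η) (hnb : ¬ Biv A L η) : Wset A L η ⊆ {x} := by
  intro z hz
  by_contra hc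
  exact hnb ⟨z, x, hz, hx, fun h => hc (by simp [h])⟩

/-- The absorbing case: the configuration after `e₁` agrees with the configuration
before it, including memory. -/
theorem absorb (hn : 3 ≤ n) (hwf : WaitFree A) (hLin : IsLinFun A L)
    (hL : PrefixClosedLin A L) {α₀ : List (Event n (LLContestSpec n))} {C : Config A}
    (hC : execConfig A α₀ = some C) (hcl : ClosedExec A L α₀)
    {e₁ e₂ : Event n (LLContestSpec n)} (hp1 : e₁.proc.val ≠ 0) (hp2 : e₂.proc.val ≠ 0)
    (hpq : e₂.proc ≠ e₁.proc)
    {D₁ : Config A} (hD₁ : nextConfig A C e₁ = some D₁)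
    {D₂ : Config A} (hD₂ : nextConfig A C e₂ = some D₂)
    (hmem : D₁.mem = C.mem)
    {i0 : Fin n} (hi0 : i0.val = 0) {op0 : (LLContestSpec n).Op}
    (hpend : C.pend i0 = some op0)
    {x y : ℕ} (hsx : Wset A L (α₀ ++ [e₁]) ⊆ {x}) (hsy : Wset A L (α₀ ++ [e₂]) ⊆ {y}) :
    x = y := by
  have hα : IsExec A α₀ := by rw [IsExec, hC]; rfl
  have hi0p : i0 ≠ e₁.proc := fun hc => hp1 (hc ▸ hi0)
  have hi0q : i0 ≠ e₂.proc := fun hc => hp2 (hc ▸ hi0)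
  have hag1 : AgreeExc e₁.proc C D₁ :=
    ⟨hmem.symm, fun j hj => by
      obtain ⟨a, b, c⟩ := nextConfig_other hD₁ hj
      exact ⟨a.symm, b.symm, c.symm⟩⟩
  obtain ⟨D₂', hD₂', hagD⟩ := bisim_next hD₂ hpq hag1
  -- executions
  have hex₁ : execConfig A (α₀ ++ [e₁]) = some D₁ := by
    rw [execConfig_snoc, hC, Option.bind_some]; exact hD₁
  have hex₂ : execConfig A (α₀ ++ [e₂]) = some D₂ := by
    rw [execConfig_snoc, hC, Option.bind_some]; exact hD₂
  have hex₁₂ : execConfig A ((α₀ ++ [e₁]) ++ [e₂]) = some D₂' := by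
    rw [execConfig_snoc, hex₁, Option.bind_some]; exact hD₂'
  -- closedness
  have hcl₁ : ClosedExec A L (α₀ ++ [e₁]) :=
    closed_extend hL hcl (competitorsOnly_singleton hp1) (by rw [IsExec, hex₁]; rfl)
  have hcl₂ : ClosedExec A L (α₀ ++ [e₂]) :=
    closed_extend hL hcl (competitorsOnly_singleton hp2) (by rw [IsExec, hex₂]; rfl)
  have hcl₁₂ : ClosedExec A L ((α₀ ++ [e₁]) ++ [e₂]) :=
    closed_extend hL hcl₁ (competitorsOnly_singleton hp2) (by rw [IsExec, hex₁₂]; rfl)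
  -- pending referee operation
  have hpend₁ : D₁.pend i0 = some op0 := by
    rw [(nextConfig_other hD₁ hi0p).2.1]; exact hpend
  have hpend₁₂ : D₂'.pend i0 = some op0 := by
    rw [(nextConfig_other hD₂' hi0q).2.1]; exact hpend₁
  -- valency bounds
  have hsx' : Wset A L ((α₀ ++ [e₁]) ++ [e₂]) ⊆ {x} :=
    (Wset_sub_extend (competitorsOnly_singleton hp2)).trans hsx
  exact main_agree hn hwf hLin hL hp1 hex₁₂ hex₂ hcl₁₂ hcl₂ hagD.symm hi0 hpend₁₂ hsx' hsy


theorem rw_apply_write (v s : ℕ) : RWRegister.apply (some v) s = (v, []) := rfl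

/-- Both pending steps are writes. -/
theorem write_write (hn : 3 ≤ n) (hwf : WaitFree A) (hLin : IsLinFun A L)
    (hL : PrefixClosedLin A L) {α₀ : List (Event n (LLContestSpec n))} {C : Config A}
    (hC : execConfig A α₀ = some C) (hcl : ClosedExec A L α₀)
    {p q : Fin n} (hp1 : p.val ≠ 0) (hp2 : q.val ≠ 0) (hpq : q ≠ p)
    {D₁ D₂ : Config A} (hD₁ : nextConfig A C (Event.step p) = some D₁)
    (hD₂ : nextConfig A C (Event.step q) = some D₂)
    {v₁ v₂ : ℕ} (hw1 : A.prim p (C.loc p) = some v₁) (hw2 : A.prim q (C.loc q) = some v₂)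
    {i0 : Fin n} (hi0 : i0.val = 0) {op0 : (LLContestSpec n).Op}
    (hpend : C.pend i0 = some op0)
    {x y : ℕ} (hsx : Wset A L (α₀ ++ [Event.step p]) ⊆ {x})
    (hsy : Wset A L (α₀ ++ [Event.step q]) ⊆ {y}) : x = y := by
  have hα : IsExec A α₀ := by rw [IsExec, hC]; rfl
  have hi0p : i0 ≠ p := fun hc => hp1 (hc ▸ hi0)
  have hi0q : i0 ≠ q := fun hc => hp2 (hc ▸ hi0)
  obtain ⟨⟨op1, hpendp⟩, hretp, hm1, hl1, hpd1, hh1⟩ := nextConfig_step_inversion hD₁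
  obtain ⟨⟨op2, hpendq⟩, hretq, hm2, hl2, hpd2, hh2⟩ := nextConfig_step_inversion hD₂
  have hm1' : D₁.mem = updMem C.mem (A.obj p (C.loc p)) v₁ := by rw [hm1, hw1]; rfl
  have hm2' : D₂.mem = updMem C.mem (A.obj q (C.loc q)) v₂ := by rw [hm2, hw2]; rfl
  have hl1' : D₁.loc = Function.update C.loc p (A.updL p (C.loc p) []) := by rw [hl1, hw1]; rfl
  have hl2' : D₂.loc = Function.update C.loc q (A.updL q (C.loc q) []) := by rw [hl2, hw2]; rfl
  -- q's step enabled after p's step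
  have hlocq : D₁.loc q = C.loc q := by rw [hl1', Function.update_of_ne hpq]
  have hpendq' : D₁.pend q = some op2 := by rw [hpd1]; exact hpendq
  have hretq' : A.ret q (D₁.loc q) = none := by rw [hlocq]; exact hretq
  obtain ⟨D₁₂, hD₁₂⟩ : ∃ D, nextConfig A D₁ (Event.step q) = some D :=
    ⟨_, nextConfig_step_some hpendq' hretq'⟩
  obtain ⟨-, -, hm12, hl12, hpd12, hh12⟩ := nextConfig_step_inversion hD₁₂
  have hm12' : D₁₂.mem =
      updMem (updMem C.mem (A.obj p (C.loc p)) v₁) (A.obj q (C.loc q)) v₂ := by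
    rw [hm12, hlocq, hw2, ← hm1']; rfl
  have hl12' : D₁₂.loc = Function.update D₁.loc q (A.updL q (C.loc q) []) := by
    rw [hl12, hlocq, hw2]; rfl
  -- common bookkeeping
  have hex₁ : execConfig A (α₀ ++ [Event.step p]) = some D₁ := by
    rw [execConfig_snoc, hC, Option.bind_some]; exact hD₁
  have hex₂ : execConfig A (α₀ ++ [Event.step q]) = some D₂ := by
    rw [execConfig_snoc, hC, Option.bind_some]; exact hD₂
  have hex₁₂ : execConfig A ((α₀ ++ [Event.step p]) ++ [Event.step q]) = some D₁₂ := by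
    rw [execConfig_snoc, hex₁, Option.bind_some]; exact hD₁₂
  have hco₁ : CompetitorsOnly [Event.step p] := competitorsOnly_singleton hp1
  have hco₂ : CompetitorsOnly [Event.step q] := competitorsOnly_singleton hp2
  have hcl₁ : ClosedExec A L (α₀ ++ [Event.step p]) :=
    closed_extend hL hcl hco₁ (by rw [IsExec, hex₁]; rfl)
  have hcl₂ : ClosedExec A L (α₀ ++ [Event.step q]) :=
    closed_extend hL hcl hco₂ (by rw [IsExec, hex₂]; rfl)
  have hcl₁₂ : ClosedExec A L ((α₀ ++ [Event.step p]) ++ [Event.step q]) :=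
    closed_extend hL hcl₁ hco₂ (by rw [IsExec, hex₁₂]; rfl)
  have hpend₁₂ : D₁₂.pend i0 = some op0 := by
    rw [hpd12, hpd1]; exact hpend
  have hsx' : Wset A L ((α₀ ++ [Event.step p]) ++ [Event.step q]) ⊆ {x} :=
    (Wset_sub_extend hco₂).trans hsx
  by_cases ho : A.obj p (C.loc p) = A.obj q (C.loc q)
  · -- same register: overwriting
    have hagD : AgreeExc p D₁₂ D₂ := by
      refine ⟨?_, fun j hj => ?_⟩
      · rw [hm12', hm2', ho]; exact updMem_overwrite _ _ _ _
      · refine ⟨?_, ?_, ?_⟩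
        · rw [hl12', hl2']
          by_cases hjq : j = q
          · subst hjq; rw [Function.update_self, Function.update_self]
          · rw [Function.update_of_ne hjq, Function.update_of_ne hjq, hl1',
              Function.update_of_ne hj]
        · rw [hpd12, hpd1, hpd2]
        · rw [hh12, hh1, hh2]
    exact main_agree hn hwf hLin hL hp1 hex₁₂ hex₂ hcl₁₂ hcl₂ hagD hi0 hpend₁₂ hsx' hsy
  · -- distinct registers: commuting
    have hlocp : D₂.loc p = C.loc p := by rw [hl2', Function.update_of_ne (Ne.symm hpq)]
    have hpendp' : D₂.pend p = some op1 := by rw [hpd2]; exact hpendp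
    have hretp' : A.ret p (D₂.loc p) = none := by rw [hlocp]; exact hretp
    obtain ⟨D₂₁, hD₂₁⟩ : ∃ D, nextConfig A D₂ (Event.step p) = some D :=
      ⟨_, nextConfig_step_some hpendp' hretp'⟩
    obtain ⟨-, -, hm21, hl21, hpd21, hh21⟩ := nextConfig_step_inversion hD₂₁
    have hm21' : D₂₁.mem =
        updMem (updMem C.mem (A.obj q (C.loc q)) v₂) (A.obj p (C.loc p)) v₁ := by
      rw [hm21, hlocp, hw1, ← hm2']; rfl
    have hl21' : D₂₁.loc = Function.update D₂.loc p (A.updL p (C.loc p) []) := by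
      rw [hl21, hlocp, hw1]; rfl
    have hex₂₁ : execConfig A ((α₀ ++ [Event.step q]) ++ [Event.step p]) = some D₂₁ := by
      rw [execConfig_snoc, hex₂, Option.bind_some]; exact hD₂₁
    have hcl₂₁ : ClosedExec A L ((α₀ ++ [Event.step q]) ++ [Event.step p]) :=
      closed_extend hL hcl₂ hco₁ (by rw [IsExec, hex₂₁]; rfl)
    have hpend₂₁ : D₂₁.pend i0 = some op0 := by
      rw [hpd21, hpd2]; exact hpend
    have hsy' : Wset A L ((α₀ ++ [Event.step q]) ++ [Event.step p]) ⊆ {y} :=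
      (Wset_sub_extend hco₁).trans hsy
    have hagD : AgreeExc p D₁₂ D₂₁ := by
      refine ⟨?_, fun j hj => ?_⟩
      · rw [hm12', hm21']; exact updMem_comm _ ho _ _
      · refine ⟨?_, ?_, ?_⟩
        · rw [hl12', hl21']
          by_cases hjq : j = q
          · subst hjq
            rw [Function.update_self, Function.update_of_ne hj, hl2',
              Function.update_self]
          · rw [Function.update_of_ne hjq, Function.update_of_ne hj, hl1', hl2',
              Function.update_of_ne hj, Function.update_of_ne hjq]
        · rw [hpd12, hpd1, hpd21, hpd2]
        · rw [hh12, hh1, hh21, hh2]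
    exact main_agree hn hwf hLin hL hp1 hex₁₂ hex₂₁ hcl₁₂ hcl₂₁ hagD hi0 hpend₁₂ hsx' hsy'


/-- Bivalence propagates to some one-step competitor extension of a closed execution. -/
theorem biv_step (hn : 3 ≤ n) (hwf : WaitFree A) (hLin : IsLinFun A L)
    (hL : PrefixClosedLin A L) {α₀ : List (Event n (LLContestSpec n))}
    (hα : IsExec A α₀) (hcl : ClosedExec A L α₀) (hbiv : Biv A L α₀) :
    ∃ e : Event n (LLContestSpec n), e.proc.val ≠ 0 ∧ IsExec A (α₀ ++ [e]) ∧
      Biv A L (α₀ ++ [e]) := by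
  obtain ⟨C, hC⟩ := Option.isSome_iff_exists.1 hα
  obtain ⟨op0, hpend⟩ := biv_pend_some hLin hL hC hbiv (i := ⟨0, by omega⟩) rfl
  obtain ⟨x, y, hx, hy, hxy⟩ := hbiv
  obtain ⟨βx, hcox, hexx, hdecx⟩ := hx
  obtain ⟨βy, hcoy, hexy, hdecy⟩ := hy
  cases βx with
  | nil =>
    exfalso
    rw [List.append_nil] at hdecx hexx
    obtain ⟨j, i, hi, hj, hmem⟩ := hdecx
    have hsub := W_sub_of_decided hLin hL hα hi hj hmem
    have hxW : x ∈ Wset A L α₀ := ⟨[], competitorsOnly_nil, by simpa using hα,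
      by rw [List.append_nil]; exact ⟨j, i, hi, hj, hmem⟩⟩
    have hyW : y ∈ Wset A L α₀ := ⟨βy, hcoy, hexy, hdecy⟩
    exact hxy ((hsub hxW).trans (hsub hyW).symm)
  | cons e₁ t₁ =>
    cases βy with
    | nil =>
      exfalso
      rw [List.append_nil] at hdecy hexy
      obtain ⟨j, i, hi, hj, hmem⟩ := hdecy
      have hsub := W_sub_of_decided hLin hL hα hi hj hmem
      have hyW : y ∈ Wset A L α₀ := ⟨[], competitorsOnly_nil, by simpa using hα,
        by rw [List.append_nil]; exact ⟨j, i, hi, hj, hmem⟩⟩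
      have hxW : x ∈ Wset A L α₀ := ⟨e₁ :: t₁, hcox, hexx, hdecx⟩
      exact hxy ((hsub hxW).trans (hsub hyW).symm)
    | cons e₂ t₂ =>
      have hx1 : x ∈ Wset A L (α₀ ++ [e₁]) := by
        refine ⟨t₁, fun e he => hcox e (List.mem_cons_of_mem _ he), ?_, ?_⟩
        · rw [List.append_assoc]; exact hexx
        · rw [List.append_assoc]; exact hdecx
      have hy1 : y ∈ Wset A L (α₀ ++ [e₂]) := by
        refine ⟨t₂, fun e he => hcoy e (List.mem_cons_of_mem _ he), ?_, ?_⟩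
        · rw [List.append_assoc]; exact hexy
        · rw [List.append_assoc]; exact hdecy
      have hp1 : e₁.proc.val ≠ 0 := hcox e₁ (List.mem_cons_self)
      have hp2 : e₂.proc.val ≠ 0 := hcoy e₂ (List.mem_cons_self)
      have hex₁ : IsExec A (α₀ ++ [e₁]) :=
        isExec_of_prefix ⟨t₁, by rw [List.append_assoc]; rfl⟩ hexx
      have hex₂ : IsExec A (α₀ ++ [e₂]) :=
        isExec_of_prefix ⟨t₂, by rw [List.append_assoc]; rfl⟩ hexy
      by_cases hb₁ : Biv A L (α₀ ++ [e₁])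
      · exact ⟨e₁, hp1, hex₁, hb₁⟩
      by_cases hb₂ : Biv A L (α₀ ++ [e₂])
      · exact ⟨e₂, hp2, hex₂, hb₂⟩
      exfalso
      have hsx : Wset A L (α₀ ++ [e₁]) ⊆ {x} := W_sub_singleton_of_not_biv hx1 hb₁
      have hsy : Wset A L (α₀ ++ [e₂]) ⊆ {y} := W_sub_singleton_of_not_biv hy1 hb₂
      obtain ⟨D₁, hD₁⟩ : ∃ D, nextConfig A C e₁ = some D := by
        have := hex₁
        rw [IsExec, execConfig_snoc, hC, Option.bind_some] at this
        exact Option.isSome_iff_exists.1 this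
      obtain ⟨D₂, hD₂⟩ : ∃ D, nextConfig A C e₂ = some D := by
        have := hex₂
        rw [IsExec, execConfig_snoc, hC, Option.bind_some] at this
        exact Option.isSome_iff_exists.1 this
      have hpq : e₂.proc ≠ e₁.proc := by
        intro hc
        have he : e₁ = e₂ := by
          rw [enabled_eq_llNextEvent hD₁, enabled_eq_llNextEvent hD₂, hc]
        rw [← he] at hy1
        exact hxy (Set.mem_singleton_iff.1 (hsx hy1)).symm
      cases e₁ with
      | inv i1 op1 =>
        exact hxy (absorb hn hwf hLin hL hC hcl hp1 hp2 hpq hD₁ hD₂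
          (nextConfig_mem_nonstep hD₁ (fun i' => by simp)) rfl hpend hsx hsy)
      | res i1 r1 =>
        exact hxy (absorb hn hwf hLin hL hC hcl hp1 hp2 hpq hD₁ hD₂
          (nextConfig_mem_nonstep hD₁ (fun i' => by simp)) rfl hpend hsx hsy)
      | step p =>
        cases hw1 : A.prim p (C.loc p) with
        | none =>
          have hmem : D₁.mem = C.mem := by
            obtain ⟨-, -, hm1, -, -, -⟩ := nextConfig_step_inversion hD₁
            rw [hm1, hw1]
            exact updMem_self C.mem _
          exact hxy (absorb hn hwf hLin hL hC hcl hp1 hp2 hpq hD₁ hD₂ hmem rfl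
            hpend hsx hsy)
        | some v₁ =>
          cases e₂ with
          | inv i2 op2 =>
            exact hxy (absorb hn hwf hLin hL hC hcl hp2 hp1 (fun hc => hpq hc.symm)
              hD₂ hD₁ (nextConfig_mem_nonstep hD₂ (fun i' => by simp)) rfl hpend
              hsy hsx).symm
          | res i2 r2 =>
            exact hxy (absorb hn hwf hLin hL hC hcl hp2 hp1 (fun hc => hpq hc.symm)
              hD₂ hD₁ (nextConfig_mem_nonstep hD₂ (fun i' => by simp)) rfl hpend
              hsy hsx).symm
          | step q =>
            cases hw2 : A.prim q (C.loc q) with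
            | none =>
              have hmem : D₂.mem = C.mem := by
                obtain ⟨-, -, hm2, -, -, -⟩ := nextConfig_step_inversion hD₂
                rw [hm2, hw2]
                exact updMem_self C.mem _
              exact hxy (absorb hn hwf hLin hL hC hcl hp2 hp1 (fun hc => hpq hc.symm)
                hD₂ hD₁ hmem rfl hpend hsy hsx).symm
            | some v₂ =>
              exact hxy (write_write hn hwf hLin hL hC hcl hp1 hp2 hpq hD₁ hD₂
                hw1 hw2 rfl hpend hsx hsy)


/-- A closed execution cannot be bivalent. -/
theorem no_biv_closed (hn : 3 ≤ n) (hwf : WaitFree A) (hLin : IsLinFun A L)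
    (hL : PrefixClosedLin A L) {α : List (Event n (LLContestSpec n))}
    (hα : IsExec A α) (hcl : ClosedExec A L α) : ¬ Biv A L α := by
  intro hbiv
  classical
  have hstep : ∀ γ : List (Event n (LLContestSpec n)),
      (IsExec A γ ∧ ClosedExec A L γ ∧ Biv A L γ) →
      ∃ e : Event n (LLContestSpec n), e.proc.val ≠ 0 ∧
        (IsExec A (γ ++ [e]) ∧ ClosedExec A L (γ ++ [e]) ∧ Biv A L (γ ++ [e])) := by
    rintro γ ⟨h1, h2, h3⟩
    obtain ⟨e, he0, hex, hb⟩ := biv_step hn hwf hLin hL h1 h2 h3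
    exact ⟨e, he0, hex, closed_extend hL h2 (competitorsOnly_singleton he0) hex, hb⟩
  let Q : List (Event n (LLContestSpec n)) → Prop :=
    fun γ => IsExec A γ ∧ ClosedExec A L γ ∧ Biv A L γ
  let g : ℕ → {γ // Q γ} := fun m => Nat.rec ⟨α, hα, hcl, hbiv⟩
    (fun _ ih => ⟨ih.val ++ [Classical.choose (hstep ih.val ih.property)],
      (Classical.choose_spec (hstep ih.val ih.property)).2⟩) m
  let E : ℕ → Event n (LLContestSpec n) :=
    fun m => Classical.choose (hstep (g m).val (g m).property)
  have hgsucc : ∀ m, (g (m+1)).val = (g m).val ++ [E m] := fun m => rfl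
  have hE0 : ∀ m, (E m).proc.val ≠ 0 :=
    fun m => (Classical.choose_spec (hstep (g m).val (g m).property)).1
  have hgval : ∀ m, (g m).val = α ++ prefE E m := by
    intro m
    induction m with
    | zero =>
      show α = α ++ prefE E 0
      rw [prefE_zero, List.append_nil]
    | succ m ih => rw [hgsucc, ih, prefE_succ, List.append_assoc]
  obtain ⟨m, x, hdec⟩ := hcl E hE0 (fun m => by rw [← hgval]; exact (g m).property.1)
  rw [← hgval] at hdec
  obtain ⟨j, i, hi, hj, hmem⟩ := hdec
  have hsub := W_sub_of_decided hLin hL (g m).property.1 hi hj hmem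
  obtain ⟨a, b, ha, hb, hab⟩ := (g m).property.2.2
  exact hab ((hsub ha).trans (hsub hb).symm)

end CaseAnalysis

end AuxClosed

/-- (Lemma `closed`.) Assume the wait-free strongly linearizable
implementation `A` of the long-lived contest object uses only read/write registers
and `n ≥ 3`.  If a finite execution `α` of `A` is closed, then `W(α)` contains exactly
one element. -/
theorem closed_valency_singleton_rw :
    ∀ (n : ℕ) (hn : 3 ≤ n) (ι : Type)
      (A : Impl n (LLContestSpec n) ι (fun _ => RWRegister))
      (L : List (Event n (LLContestSpec n)) → List (ℕ × (LLContestSpec n).Res)),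
      WaitFree A → IsLinFun A L → PrefixClosedLin A L →
      ∀ α : List (Event n (LLContestSpec n)), IsExec A α → ClosedExec A L α →
        ∃ x : ℕ, Wset A L α = {x} := by
  intro n hn ι A L hwf hLin hL α hα hcl
  obtain ⟨x, hxW, -⟩ := closed_nonempty hL hα hcl (q := ⟨1, by omega⟩) Nat.one_ne_zero
  refine ⟨x, Set.eq_singleton_iff_unique_mem.2 ⟨hxW, fun y hy => ?_⟩⟩
  by_contra hne
  exact no_biv_closed hn hwf hLin hL hα hcl ⟨y, x, hy, hxW, hne⟩
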